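/- arXiv:1907.06624 — 4 statements merged into one kernel-verified Lean document; each statement's English description precedes it below -/
import Mathlib

section
/- Hybrid quantum–classical continuity equation: let m, M, ħ > 0, let V : ℝⁿ × ℝᵐ → ℝ be smooth, set H_I(q,p,x) := |p|²/(2M) + V(q,x) and L_I(q,p,x) := |p|²/(2M) − V(q,x), and let 𝒮, ℛ : ℝ × (ℝ²ⁿ × ℝᵐ) → ℝ be smooth with ℛ > 0 satisfying the hybrid Madelung equations ∂ₜ𝒮 + |∇ₓ𝒮|²/(2m) − (ħ²/(2m))(Δₓℛ)/ℛ = L_I + {H_I, 𝒮} and ∂ₜℛ + (1/(2mℛ)) divₓ(ℛ² ∇ₓ𝒮) = {H_I, ℛ}. Then the hybrid density 𝒟 := ℛ² + Σᵢ ∂_{pᵢ}(pᵢ ℛ²) + {ℛ², 𝒮} satisfies ∂ₜ𝒟 = {H_I, 𝒟} − Σ_{k=1}^{m} ∂_{xᵏ} (J_Q)ₖ, where (J_Q)ₖ := (1/m)[ ℛ² ∂_{xᵏ}𝒮 + Σᵢ ∂_{pᵢ}(pᵢ ℛ² ∂_{xᵏ}𝒮) + {ℛ² ∂_{xᵏ}𝒮,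 𝒮} − ħ² {ℛ, ∂_{xᵏ}ℛ} ]. -/
open Complex

noncomputable section

/-- Classical phase space `T*Q = ℝⁿ × ℝⁿ` with coordinates `z = (q, p)`. -/
abbrev PS (n : ℕ) := (Fin n → ℝ) × (Fin n → ℝ)

variable {n : ℕ}

/-- Partial derivative `∂f/∂qⁱ` of a complex-valued function on phase space. -/
noncomputable def dq (i : Fin n) (f : PS n → ℂ) (z : PS n) : ℂ :=
  fderiv ℝ f z (Pi.single i 1, 0)

/-- Partial derivative `∂f/∂pᵢ` of a complex-valued function on phase space. -/
noncomputable def dp (i : Fin n) (f : PS n → ℂ) (z : PS n) : ℂ :=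
  fderiv ℝ f z (0, Pi.single i 1)

/-- Partial derivative `∂f/∂qⁱ` of a real-valued function on phase space. -/
noncomputable def dqR (i : Fin n) (f : PS n → ℝ) (z : PS n) : ℝ :=
  fderiv ℝ f z (Pi.single i 1, 0)

/-- Partial derivative `∂f/∂pᵢ` of a real-valued function on phase space. -/
noncomputable def dpR (i : Fin n) (f : PS n → ℝ) (z : PS n) : ℝ :=
  fderiv ℝ f z (0, Pi.single i 1)

/-- Canonical Poisson bracket `{F,G} = Σᵢ (∂F/∂qⁱ ∂G/∂pᵢ − ∂F/∂pᵢ ∂G/∂qⁱ)`,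
extended ℂ-bilinearly to complex-valued functions. -/
noncomputable def pb (F G : PS n → ℂ) (z : PS n) : ℂ :=
  ∑ i, (dq i F z * dp i G z - dp i F z * dq i G z)

/-- Canonical Poisson bracket of real-valued functions. -/
noncomputable def pbR (F G : PS n → ℝ) (z : PS n) : ℝ :=
  ∑ i, (dqR i F z * dpR i G z - dpR i F z * dqR i G z)

/-- Hybrid quantum–classical coordinate space `Γ = ℝ²ⁿ × ℝᵈ`. -/
abbrev Hyb (n d : ℕ) := PS n × (Fin d → ℝ)

variable {d : ℕ}

/-- `∂f/∂qⁱ` on the hybrid space (real-valued). -/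
noncomputable def dqH (i : Fin n) (f : Hyb n d → ℝ) (w : Hyb n d) : ℝ :=
  fderiv ℝ f w ((Pi.single i 1, 0), 0)

/-- `∂f/∂pᵢ` on the hybrid space (real-valued). -/
noncomputable def dpH (i : Fin n) (f : Hyb n d → ℝ) (w : Hyb n d) : ℝ :=
  fderiv ℝ f w ((0, Pi.single i 1), 0)

/-- `∂f/∂xᵏ` on the hybrid space (real-valued). -/
noncomputable def dxH (k : Fin d) (f : Hyb n d → ℝ) (w : Hyb n d) : ℝ :=
  fderiv ℝ f w (0, Pi.single k 1)

/-- Canonical Poisson bracket in the phase-space variables `z = (q,p)` only,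
pointwise in the quantum coordinate `x`. -/
noncomputable def pbH (F G : Hyb n d → ℝ) (w : Hyb n d) : ℝ :=
  ∑ i, (dqH i F w * dpH i G w - dpH i F w * dqH i G w)

/-- Laplacian `Δₓ` in the quantum variables `x` (real-valued). -/
noncomputable def laplxH (f : Hyb n d → ℝ) (w : Hyb n d) : ℝ :=
  ∑ k, dxH k (fun w' => dxH k f w') w

/-- The classical-plus-interaction Hamiltonian `H_I(q,p,x) = |p|²/(2M) + V(q,x)`. -/
noncomputable def HI (M : ℝ) (V : (Fin n → ℝ) × (Fin d → ℝ) → ℝ) (w : Hyb n d) : ℝ :=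
  (∑ i, w.1.2 i ^ 2) / (2 * M) + V (w.1.1, w.2)

/-- The classical-plus-interaction Lagrangian `L_I(q,p,x) = |p|²/(2M) − V(q,x)`. -/
noncomputable def LI (M : ℝ) (V : (Fin n → ℝ) × (Fin d → ℝ) → ℝ) (w : Hyb n d) : ℝ :=
  (∑ i, w.1.2 i ^ 2) / (2 * M) - V (w.1.1, w.2)

/-- The hybrid density `𝒟 = ℛ² + Σᵢ ∂_{pᵢ}(pᵢ ℛ²) + {ℛ², 𝒮}` at a fixed time. -/
noncomputable def hybDen (ℛt 𝒮t : Hyb n d → ℝ) (w : Hyb n d) : ℝ :=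
  ℛt w ^ 2 + ∑ i, dpH i (fun w' => w'.1.2 i * ℛt w' ^ 2) w
    + pbH (fun w' => ℛt w' ^ 2) 𝒮t w

/-- The quantum component of the hybrid current,
`(J_Q)ₖ = (1/m)[ℛ² ∂_{xᵏ}𝒮 + Σᵢ ∂_{pᵢ}(pᵢ ℛ² ∂_{xᵏ}𝒮) + {ℛ² ∂_{xᵏ}𝒮, 𝒮} − ℏ²{ℛ, ∂_{xᵏ}ℛ}]`. -/
noncomputable def JQ (m ℏ : ℝ) (ℛt 𝒮t : Hyb n d → ℝ) (k : Fin d) (w : Hyb n d) : ℝ :=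
  (1 / m) * (ℛt w ^ 2 * dxH k 𝒮t w
    + ∑ i, dpH i (fun w' => w'.1.2 i * (ℛt w' ^ 2 * dxH k 𝒮t w')) w
    + pbH (fun w' => ℛt w' ^ 2 * dxH k 𝒮t w') 𝒮t w
    - ℏ ^ 2 * pbH ℛt (fun w' => dxH k ℛt w') w)

abbrev EE (n d : ℕ) := ℝ × Hyb n d
variable {n d : ℕ}

theorem wtop {k : ℕ} : ((k:ℕ∞) : WithTop ℕ∞) ≤ ((⊤:ℕ∞) : WithTop ℕ∞) :=
  WithTop.coe_le_coe.2 le_top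

theorem wtop1 : ((⊤:ℕ∞) : WithTop ℕ∞) + 1 ≤ ((⊤:ℕ∞) : WithTop ℕ∞) :=
  le_of_eq ENat.coe_top_add_one

/-- Smoothness abbreviation. -/
def SM (f : EE n d → ℝ) : Prop := ContDiff ℝ (⊤:ℕ∞) f

def Dv (v : EE n d) (f : EE n d → ℝ) (x : EE n d) : ℝ := fderiv ℝ f x v

theorem SM.diff {f : EE n d → ℝ} (hf : SM f) : Differentiable ℝ f :=
  hf.differentiable (by simp)

theorem SM.dv {f : EE n d → ℝ} (hf : SM f) (v : EE n d) : SM (Dv v f) :=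
  (hf.fderiv_right wtop1).clm_apply contDiff_const

theorem SM.add {f g : EE n d → ℝ} (hf : SM f) (hg : SM g) : SM (fun x => f x + g x) := ContDiff.add hf hg
theorem SM.sub {f g : EE n d → ℝ} (hf : SM f) (hg : SM g) : SM (fun x => f x - g x) := ContDiff.sub hf hg
theorem SM.mul {f g : EE n d → ℝ} (hf : SM f) (hg : SM g) : SM (fun x => f x * g x) := ContDiff.mul hf hg
theorem SM.cmul {f : EE n d → ℝ} (c : ℝ) (hf : SM f) : SM (fun x => c * f x) := ContDiff.mul contDiff_const hf
theorem SM.sum {m : ℕ} {A : Fin m → EE n d → ℝ} (hA : ∀ i, SM (A i)) :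
    SM (fun x => ∑ i, A i x) := ContDiff.sum fun i _ => hA i
theorem SM.inv {f : EE n d → ℝ} (hf : SM f) (h : ∀ x, f x ≠ 0) : SM (fun x => (f x)⁻¹) :=
  ContDiff.inv hf h

theorem Dv_congr {f g : EE n d → ℝ} (h : ∀ y, f y = g y) (v : EE n d) (x : EE n d) :
    Dv v f x = Dv v g x := by
  have : f = g := funext h
  rw [Dv, Dv, this]

theorem Dv_add {f g : EE n d → ℝ} (hf : SM f) (hg : SM g) (v x : EE n d) :
    Dv v (fun y => f y + g y) x = Dv v f x + Dv v g x := by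
  rw [Dv, fderiv_fun_add (hf.diff x) (hg.diff x)]; rfl

theorem Dv_sub {f g : EE n d → ℝ} (hf : SM f) (hg : SM g) (v x : EE n d) :
    Dv v (fun y => f y - g y) x = Dv v f x - Dv v g x := by
  rw [Dv, fderiv_fun_sub (hf.diff x) (hg.diff x)]; rfl

theorem Dv_mul {f g : EE n d → ℝ} (hf : SM f) (hg : SM g) (v x : EE n d) :
    Dv v (fun y => f y * g y) x = Dv v f x * g x + f x * Dv v g x := by
  rw [Dv, fderiv_fun_mul (hf.diff x) (hg.diff x)]
  simp [Dv]; ring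

theorem Dv_cmul {f : EE n d → ℝ} (c : ℝ) (hf : SM f) (v x : EE n d) :
    Dv v (fun y => c * f y) x = c * Dv v f x := by
  rw [Dv, fderiv_const_mul (hf.diff x)]; rfl

theorem Dv_const (c : ℝ) (v x : EE n d) : Dv v (fun _ => c) x = 0 := by
  rw [Dv, fderiv_fun_const]; rfl

theorem Dv_sum {m : ℕ} {A : Fin m → EE n d → ℝ} (hA : ∀ i, SM (A i)) (v x : EE n d) :
    Dv v (fun y => ∑ i, A i y) x = ∑ i, Dv v (A i) x := by
  rw [Dv, fderiv_fun_sum (fun i _ => ((hA i).diff x))]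
  simp [Dv]

theorem Dv_sq {f : EE n d → ℝ} (hf : SM f) (v x : EE n d) :
    Dv v (fun y => f y ^ 2) x = 2 * f x * Dv v f x := by
  have : (fun y => f y ^ 2) = fun y => f y * f y := by funext y; ring
  rw [this, Dv_mul hf hf]; ring

theorem Dv_inv {f : EE n d → ℝ} (hf : SM f) (h0 : ∀ y, f y ≠ 0) (v x : EE n d) :
    Dv v (fun y => (f y)⁻¹) x = -((f x)^2)⁻¹ * Dv v f x := by
  have h1 : HasFDerivAt (fun t : ℝ => t⁻¹)
      (ContinuousLinearMap.smulRight (1 : ℝ →L[ℝ] ℝ) (-((f x)^2)⁻¹)) (f x) := by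
    have := (hasDerivAt_inv (h0 x))
    exact this.hasFDerivAt
  have h2 : HasFDerivAt (fun y => (f y)⁻¹) _ x := h1.comp x ((hf.diff x).hasFDerivAt)
  rw [Dv, h2.fderiv]
  simp [Dv]; ring

theorem Dv_comm {f : EE n d → ℝ} (hf : SM f) (u v : EE n d) (x : EE n d) :
    Dv u (Dv v f) x = Dv v (Dv u f) x := by
  have hd : Differentiable ℝ (fderiv ℝ f) := (hf.fderiv_right wtop1).differentiable (by simp)
  have key : ∀ a b : EE n d, Dv a (Dv b f) x = fderiv ℝ (fderiv ℝ f) x a b := by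
    intro a b
    show fderiv ℝ (fun y => (fderiv ℝ f y) ((fun _ => b) y)) x a = _
    rw [fderiv_clm_apply (hd x) (differentiableAt_const b)]
    simp
  rw [key, key]
  have hsymm := (hf.contDiffAt (x := x)).isSymmSndFDerivAt
    (by rw [minSmoothness_of_isRCLikeNormedField, ← WithTop.coe_ofNat]; exact WithTop.coe_le_coe.2 le_top)
  exact hsymm u v
/-- basis vectors -/
def vq (n d : ℕ) (i : Fin n) : EE n d := (0, ((Pi.single i 1, 0), 0))
def vp (n d : ℕ) (i : Fin n) : EE n d := (0, ((0, Pi.single i 1), 0))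
def vx (n d : ℕ) (k : Fin d) : EE n d := (0, (0, Pi.single k 1))
def vt (n d : ℕ) : EE n d := (1, 0)

theorem SM.slice {F : EE n d → ℝ} (hF : SM F) (t : ℝ) :
    ContDiff ℝ (⊤:ℕ∞) (fun w' : Hyb n d => F (t, w')) :=
  hF.comp (contDiff_const.prodMk contDiff_id)

theorem dv_fix_t {F : EE n d → ℝ} (hF : SM F) (t : ℝ) (w : Hyb n d) (v : Hyb n d) :
    fderiv ℝ (fun w' => F (t, w')) w v = Dv ((0:ℝ), v) F (t, w) := by
  have h : HasFDerivAt (fun w' : Hyb n d => ((t : ℝ), w'))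
      (((0 : Hyb n d →L[ℝ] ℝ)).prod (ContinuousLinearMap.id ℝ (Hyb n d))) w :=
    HasFDerivAt.prodMk (hasFDerivAt_const t w) (hasFDerivAt_id w)
  have h2 : HasFDerivAt (fun w' => F (t, w')) _ w := ((hF.diff (t, w)).hasFDerivAt).comp w h
  rw [h2.fderiv]; rfl

theorem dv_fix_w {F : EE n d → ℝ} (hF : SM F) (t : ℝ) (w : Hyb n d) :
    deriv (fun s => F (s, w)) t = Dv ((1:ℝ), (0 : Hyb n d)) F (t, w) := by
  have h : HasDerivAt (fun s : ℝ => (s, w)) ((1:ℝ), (0:Hyb n d)) t :=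
    HasDerivAt.prodMk (hasDerivAt_id t) (hasDerivAt_const t w)
  exact ((hF.diff (t,w)).hasFDerivAt.comp_hasDerivAt t h).deriv

/-- classical momentum coordinate -/
def pc (n d : ℕ) (i : Fin n) : EE n d → ℝ := fun x => x.2.1.2 i

def Lpc (n d : ℕ) (i : Fin n) : EE n d →L[ℝ] ℝ :=
  (ContinuousLinearMap.proj i).comp
    ((ContinuousLinearMap.snd ℝ (Fin n → ℝ) (Fin n → ℝ)).comp
      ((ContinuousLinearMap.fst ℝ (PS n) (Fin d → ℝ)).comp (ContinuousLinearMap.snd ℝ ℝ (Hyb n d))))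

theorem SM.pc (i : Fin n) : SM (pc n d i) := (Lpc n d i).contDiff

theorem Dv_pc (i : Fin n) (v x : EE n d) : Dv v (pc n d i) x = v.2.1.2 i := by
  have : pc n d i = ⇑(Lpc n d i) := rfl
  rw [Dv, this, (Lpc n d i).fderiv]; rfl

theorem Dv_pc_vq (i j : Fin n) (x : EE n d) : Dv (vq n d j) (pc n d i) x = 0 := by
  rw [Dv_pc]; rfl
theorem Dv_pc_vx (i : Fin n) (k : Fin d) (x : EE n d) : Dv (vx n d k) (pc n d i) x = 0 := by
  rw [Dv_pc]; rfl
theorem Dv_pc_vt (i : Fin n) (x : EE n d) : Dv (vt n d) (pc n d i) x = 0 := by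
  rw [Dv_pc]; rfl
theorem Dv_pc_vp (i j : Fin n) (x : EE n d) :
    Dv (vp n d j) (pc n d i) x = if i = j then 1 else 0 := by
  rw [Dv_pc]
  simp [vp, Pi.single_apply]

/-- projection to (q, x) -/
def πqx (n d : ℕ) : EE n d →L[ℝ] ((Fin n → ℝ) × (Fin d → ℝ)) :=
  (((ContinuousLinearMap.fst ℝ (Fin n → ℝ) (Fin n → ℝ)).comp
      ((ContinuousLinearMap.fst ℝ (PS n) (Fin d → ℝ)).comp
        (ContinuousLinearMap.snd ℝ ℝ (Hyb n d)))).prod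
    ((ContinuousLinearMap.snd ℝ (PS n) (Fin d → ℝ)).comp (ContinuousLinearMap.snd ℝ ℝ (Hyb n d))))

variable {V : (Fin n → ℝ) × (Fin d → ℝ) → ℝ}

theorem SM.ve (hV : ContDiff ℝ (⊤:ℕ∞) V) : SM (fun x : EE n d => V (x.2.1.1, x.2.2)) :=
  hV.comp (πqx n d).contDiff

theorem Dv_ve (hV : ContDiff ℝ (⊤:ℕ∞) V) (v x : EE n d) :
    Dv v (fun y : EE n d => V (y.2.1.1, y.2.2)) x
      = fderiv ℝ V (x.2.1.1, x.2.2) (v.2.1.1, v.2.2) := by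
  have h2 : HasFDerivAt (fun y : EE n d => V (y.2.1.1, y.2.2)) _ x :=
    ((hV.differentiable (by simp) _).hasFDerivAt).comp x
      (πqx n d).hasFDerivAt
  rw [Dv, h2.fderiv]; rfl

theorem Dv_ve_vp (hV : ContDiff ℝ (⊤:ℕ∞) V) (i : Fin n) (x : EE n d) :
    Dv (vp n d i) (fun y : EE n d => V (y.2.1.1, y.2.2)) x = 0 := by
  rw [Dv_ve hV]
  show fderiv ℝ V _ ((0,0) : (Fin n → ℝ) × (Fin d → ℝ)) = 0
  exact map_zero _

theorem Dv_ve_vt (hV : ContDiff ℝ (⊤:ℕ∞) V) (x : EE n d) :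
    Dv (vt n d) (fun y : EE n d => V (y.2.1.1, y.2.2)) x = 0 := by
  rw [Dv_ve hV]
  show fderiv ℝ V _ ((0,0) : (Fin n → ℝ) × (Fin d → ℝ)) = 0
  exact map_zero _
def PBE (F G : EE n d → ℝ) (x : EE n d) : ℝ :=
  ∑ i, (Dv (vq n d i) F x * Dv (vp n d i) G x - Dv (vp n d i) F x * Dv (vq n d i) G x)

theorem SM.pbe {f g : EE n d → ℝ} (hf : SM f) (hg : SM g) : SM (PBE f g) :=
  SM.sum fun i => ((hf.dv _).mul (hg.dv _)).sub ((hf.dv _).mul (hg.dv _))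

theorem PBE_anti (f g : EE n d → ℝ) (x : EE n d) : PBE f g x = -PBE g f x := by
  rw [PBE, PBE, ← Finset.sum_neg_distrib]
  exact Finset.sum_congr rfl fun i _ => by ring

theorem PBE_self (f : EE n d → ℝ) (x : EE n d) : PBE f f x = 0 := by
  rw [PBE]; apply Finset.sum_eq_zero; intro i _; ring

theorem PBE_add_right {g h : EE n d → ℝ} (f : EE n d → ℝ) (hg : SM g) (hh : SM h) (x : EE n d) :
    PBE f (fun y => g y + h y) x = PBE f g x + PBE f h x := by
  rw [PBE, PBE, PBE, ← Finset.sum_add_distrib]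
  exact Finset.sum_congr rfl fun i _ => by rw [Dv_add hg hh, Dv_add hg hh]; ring

theorem PBE_sub_right {g h : EE n d → ℝ} (f : EE n d → ℝ) (hg : SM g) (hh : SM h) (x : EE n d) :
    PBE f (fun y => g y - h y) x = PBE f g x - PBE f h x := by
  rw [PBE, PBE, PBE, ← Finset.sum_sub_distrib]
  exact Finset.sum_congr rfl fun i _ => by rw [Dv_sub hg hh, Dv_sub hg hh]; ring

theorem PBE_cmul_right {g : EE n d → ℝ} (f : EE n d → ℝ) (c : ℝ) (hg : SM g) (x : EE n d) :
    PBE f (fun y => c * g y) x = c * PBE f g x := by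
  rw [PBE, PBE, Finset.mul_sum]
  exact Finset.sum_congr rfl fun i _ => by rw [Dv_cmul c hg, Dv_cmul c hg]; ring

theorem PBE_mul_right {g h : EE n d → ℝ} (f : EE n d → ℝ) (hg : SM g) (hh : SM h) (x : EE n d) :
    PBE f (fun y => g y * h y) x = g x * PBE f h x + h x * PBE f g x := by
  rw [PBE, PBE, PBE, Finset.mul_sum, Finset.mul_sum, ← Finset.sum_add_distrib]
  exact Finset.sum_congr rfl fun i _ => by rw [Dv_mul hg hh, Dv_mul hg hh]; ring

theorem PBE_add_left {f g : EE n d → ℝ} (hf : SM f) (hg : SM g) (h : EE n d → ℝ) (x : EE n d) :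
    PBE (fun y => f y + g y) h x = PBE f h x + PBE g h x := by
  rw [PBE_anti, PBE_add_right h hf hg, PBE_anti f h, PBE_anti g h]; ring

theorem PBE_mul_left {f g : EE n d → ℝ} (hf : SM f) (hg : SM g) (h : EE n d → ℝ) (x : EE n d) :
    PBE (fun y => f y * g y) h x = f x * PBE g h x + g x * PBE f h x := by
  rw [PBE_anti, PBE_mul_right h hf hg, PBE_anti f h, PBE_anti g h]; ring

theorem PBE_cmul_left {f : EE n d → ℝ} (c : ℝ) (hf : SM f) (h : EE n d → ℝ) (x : EE n d) :
    PBE (fun y => c * f y) h x = c * PBE f h x := by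
  rw [PBE_anti, PBE_cmul_right h c hf, PBE_anti f h]; ring

theorem PBE_sum_right {m' : ℕ} {A : Fin m' → EE n d → ℝ} (f : EE n d → ℝ) (hA : ∀ k, SM (A k))
    (x : EE n d) : PBE f (fun y => ∑ k, A k y) x = ∑ k, PBE f (A k) x := by
  rw [PBE]
  have h1 : ∀ i ∈ Finset.univ, (Dv (vq n d i) f x * Dv (vp n d i) (fun y => ∑ k, A k y) x -
      Dv (vp n d i) f x * Dv (vq n d i) (fun y => ∑ k, A k y) x)
      = ∑ k, (Dv (vq n d i) f x * Dv (vp n d i) (A k) x -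
          Dv (vp n d i) f x * Dv (vq n d i) (A k) x) := by
    intro i _
    rw [Dv_sum hA, Dv_sum hA, Finset.mul_sum, Finset.mul_sum, ← Finset.sum_sub_distrib]
  rw [Finset.sum_congr rfl h1, Finset.sum_comm]
  rfl

theorem PBE_sum_left {m' : ℕ} {A : Fin m' → EE n d → ℝ} (hA : ∀ k, SM (A k)) (g : EE n d → ℝ)
    (x : EE n d) : PBE (fun y => ∑ k, A k y) g x = ∑ k, PBE (A k) g x := by
  rw [PBE_anti, PBE_sum_right g hA, ← Finset.sum_neg_distrib]
  exact Finset.sum_congr rfl fun k _ => (PBE_anti (A k) g x).symm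

theorem Dv_PBE {f g : EE n d → ℝ} (hf : SM f) (hg : SM g) (v x : EE n d) :
    Dv v (PBE f g) x = PBE (Dv v f) g x + PBE f (Dv v g) x := by
  have hA : ∀ i : Fin n, SM (fun y => Dv (vq n d i) f y * Dv (vp n d i) g y -
      Dv (vp n d i) f y * Dv (vq n d i) g y) :=
    fun i => ((hf.dv _).mul (hg.dv _)).sub ((hf.dv _).mul (hg.dv _))
  have : Dv v (PBE f g) x = ∑ i, Dv v (fun y => Dv (vq n d i) f y * Dv (vp n d i) g y -
      Dv (vp n d i) f y * Dv (vq n d i) g y) x := Dv_sum hA v x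
  rw [this, PBE, PBE, ← Finset.sum_add_distrib]
  apply Finset.sum_congr rfl
  intro i _
  rw [Dv_sub ((hf.dv _).mul (hg.dv _)) ((hf.dv _).mul (hg.dv _)),
    Dv_mul (hf.dv _) (hg.dv _), Dv_mul (hf.dv _) (hg.dv _),
    Dv_comm hf v (vq n d i), Dv_comm hf v (vp n d i),
    Dv_comm hg v (vq n d i), Dv_comm hg v (vp n d i)]
  ring

theorem PBE_inv_right {g : EE n d → ℝ} (f : EE n d → ℝ) (hg : SM g) (h0 : ∀ y, g y ≠ 0)
    (x : EE n d) :
    PBE f (fun y => (g y)⁻¹) x = -((g x)^2)⁻¹ * PBE f g x := by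
  rw [PBE, PBE, Finset.mul_sum]
  exact Finset.sum_congr rfl fun i _ => by
    rw [Dv_inv hg h0, Dv_inv hg h0]; ring
def KEf (n d : ℕ) (M : ℝ) : EE n d → ℝ := fun x => (∑ i, pc n d i x ^ 2) / (2 * M)
def VEf (n d : ℕ) (V : (Fin n → ℝ) × (Fin d → ℝ) → ℝ) : EE n d → ℝ := fun x => V (x.2.1.1, x.2.2)

theorem SM.ke (M : ℝ) : SM (KEf n d M) :=
  ContDiff.div_const (SM.sum fun i => ContDiff.pow (SM.pc i) 2) (2*M)

theorem SM.vef (hV : ContDiff ℝ (⊤:ℕ∞) V) : SM (VEf n d V) := SM.ve hV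

theorem Dv_ke (M : ℝ) (v x : EE n d) :
    Dv v (KEf n d M) x = (∑ i, 2 * pc n d i x * v.2.1.2 i) / (2 * M) := by
  have h1 : KEf n d M = fun y => (2*M)⁻¹ * ∑ i, pc n d i y ^ 2 := by
    funext y; rw [KEf]; ring
  rw [h1, Dv_cmul _ (SM.sum fun i => ContDiff.pow (SM.pc i) 2),
    Dv_sum (fun i => ContDiff.pow (SM.pc i) 2)]
  rw [Finset.sum_congr rfl fun i _ => by rw [Dv_sq (SM.pc i), Dv_pc]]
  ring

theorem Dv_ke_vq (M : ℝ) (j : Fin n) (x : EE n d) : Dv (vq n d j) (KEf n d M) x = 0 := by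
  rw [Dv_ke]; simp [vq]

theorem Dv_ke_vx (M : ℝ) (k : Fin d) (x : EE n d) : Dv (vx n d k) (KEf n d M) x = 0 := by
  rw [Dv_ke]; simp [vx]

theorem Dv_ke_vt (M : ℝ) (x : EE n d) : Dv (vt n d) (KEf n d M) x = 0 := by
  rw [Dv_ke]; simp [vt]

theorem Dv_ke_vp (M : ℝ) (hM : M ≠ 0) (j : Fin n) (x : EE n d) :
    Dv (vp n d j) (KEf n d M) x = pc n d j x / M := by
  rw [Dv_ke]
  have h2 : ∀ i : Fin n, 2 * pc n d i x * (vp n d j).2.1.2 i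
      = if i = j then 2 * pc n d i x else 0 := by
    intro i; simp [vp, Pi.single_apply]
  rw [Finset.sum_congr rfl fun i _ => h2 i, Finset.sum_ite_eq' Finset.univ j]
  simp only [Finset.mem_univ, if_true]
  field_simp

theorem pbe_pc (i : Fin n) (g : EE n d → ℝ) (x : EE n d) :
    PBE (pc n d i) g x = -Dv (vq n d i) g x := by
  rw [PBE]
  have h2 : ∀ j : Fin n, (Dv (vq n d j) (pc n d i) x * Dv (vp n d j) g x -
      Dv (vp n d j) (pc n d i) x * Dv (vq n d j) g x)
      = if j = i then -Dv (vq n d j) g x else 0 := by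
    intro j
    rw [Dv_pc_vq, Dv_pc_vp]
    by_cases h : i = j <;> simp [h, eq_comm]
  rw [Finset.sum_congr rfl fun j _ => h2 j, Finset.sum_ite_eq' Finset.univ i]
  simp

theorem pbe_pc_right (i : Fin n) (g : EE n d → ℝ) (x : EE n d) :
    PBE g (pc n d i) x = Dv (vq n d i) g x := by
  rw [PBE_anti, pbe_pc]; ring

theorem pbe_ke (M : ℝ) (hM : M ≠ 0) (g : EE n d → ℝ) (x : EE n d) :
    PBE (KEf n d M) g x = -(1/M) * ∑ i, pc n d i x * Dv (vq n d i) g x := by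
  rw [PBE, Finset.mul_sum]
  apply Finset.sum_congr rfl
  intro i _
  rw [Dv_ke_vq, Dv_ke_vp M hM]
  field_simp
  ring

theorem Dv_vef_vp (hV : ContDiff ℝ (⊤:ℕ∞) V) (i : Fin n) (x : EE n d) :
    Dv (vp n d i) (VEf n d V) x = 0 := Dv_ve_vp hV i x

theorem Dv_vef_vt (hV : ContDiff ℝ (⊤:ℕ∞) V) (x : EE n d) :
    Dv (vt n d) (VEf n d V) x = 0 := Dv_ve_vt hV x

theorem pbe_ve (hV : ContDiff ℝ (⊤:ℕ∞) V) (g : EE n d → ℝ) (x : EE n d) :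
    PBE (VEf n d V) g x = ∑ i, Dv (vq n d i) (VEf n d V) x * Dv (vp n d i) g x := by
  rw [PBE]
  apply Finset.sum_congr rfl
  intro i _
  rw [Dv_vef_vp hV]
  ring

theorem Dv_vp_qve (hV : ContDiff ℝ (⊤:ℕ∞) V) (i j : Fin n) (x : EE n d) :
    Dv (vp n d j) (Dv (vq n d i) (VEf n d V)) x = 0 := by
  rw [Dv_comm (SM.vef hV), Dv_congr (fun y => Dv_vef_vp hV j y) (vq n d i) x]
  exact Dv_const 0 _ _

theorem pbe_qve (hV : ContDiff ℝ (⊤:ℕ∞) V) (i : Fin n) (g : EE n d → ℝ) (x : EE n d) :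
    PBE (Dv (vq n d i) (VEf n d V)) g x
      = ∑ j, Dv (vq n d j) (Dv (vq n d i) (VEf n d V)) x * Dv (vp n d j) g x := by
  rw [PBE]
  apply Finset.sum_congr rfl
  intro j _
  rw [Dv_vp_qve hV]
  ring
theorem PBE_sub_left {f g : EE n d → ℝ} (hf : SM f) (hg : SM g) (h : EE n d → ℝ) (x : EE n d) :
    PBE (fun y => f y - g y) h x = PBE f h x - PBE g h x := by
  rw [PBE_anti, PBE_sub_right h hf hg, PBE_anti f h, PBE_anti g h]; ring

theorem jacobi_KE {M : ℝ} (hM : M ≠ 0) {f g : EE n d → ℝ} (hf : SM f) (hg : SM g) (x : EE n d) :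
    PBE (KEf n d M) (PBE f g) x
      = PBE (PBE (KEf n d M) f) g x + PBE f (PBE (KEf n d M) g) x := by
  have e1 : PBE (KEf n d M) f = fun y => -(1/M) * ∑ i, pc n d i y * Dv (vq n d i) f y :=
    funext fun y => pbe_ke M hM f y
  have e2 : PBE (KEf n d M) g = fun y => -(1/M) * ∑ i, pc n d i y * Dv (vq n d i) g y :=
    funext fun y => pbe_ke M hM g y
  have hAf : ∀ i : Fin n, SM (fun y => pc n d i y * Dv (vq n d i) f y) :=
    fun i => (SM.pc i).mul (hf.dv _)
  have hAg : ∀ i : Fin n, SM (fun y => pc n d i y * Dv (vq n d i) g y) :=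
    fun i => (SM.pc i).mul (hg.dv _)
  have s1 : ∑ i, pc n d i x * Dv (vq n d i) (PBE f g) x
      = ∑ i, pc n d i x * (PBE (Dv (vq n d i) f) g x + PBE f (Dv (vq n d i) g) x) :=
    Finset.sum_congr rfl fun i _ => by rw [Dv_PBE hf hg]
  have s2 : ∑ i, PBE (fun y => pc n d i y * Dv (vq n d i) f y) g x
      = ∑ i, (pc n d i x * PBE (Dv (vq n d i) f) g x
          - Dv (vq n d i) f x * Dv (vq n d i) g x) :=
    Finset.sum_congr rfl fun i _ => by
      rw [PBE_mul_left (SM.pc i) (hf.dv _) g x, pbe_pc]; ring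
  have s3 : ∑ i, PBE f (fun y => pc n d i y * Dv (vq n d i) g y) x
      = ∑ i, (pc n d i x * PBE f (Dv (vq n d i) g) x
          + Dv (vq n d i) g x * Dv (vq n d i) f x) :=
    Finset.sum_congr rfl fun i _ => by
      rw [PBE_mul_right f (SM.pc i) (hg.dv _) x, pbe_pc_right]
  rw [pbe_ke M hM, s1, e1, e2,
    PBE_cmul_left (-(1/M)) (SM.sum hAf) g x, PBE_sum_left hAf g x,
    PBE_cmul_right f (-(1/M)) (SM.sum hAg) x, PBE_sum_right f hAg x, s2, s3,
    Finset.mul_sum, Finset.mul_sum, Finset.mul_sum, ← Finset.sum_add_distrib]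
  exact Finset.sum_congr rfl fun i _ => by ring

theorem schwarz_ve (hV : ContDiff ℝ (⊤:ℕ∞) V) (f g : EE n d → ℝ) (x : EE n d) :
    ∑ i, Dv (vp n d i) f x *
        (∑ j, Dv (vq n d j) (Dv (vq n d i) (VEf n d V)) x * Dv (vp n d j) g x)
      = ∑ i, Dv (vp n d i) g x *
        (∑ j, Dv (vq n d j) (Dv (vq n d i) (VEf n d V)) x * Dv (vp n d j) f x) := by
  have L : ∀ (h k : EE n d → ℝ), ∑ i, Dv (vp n d i) h x *
        (∑ j, Dv (vq n d j) (Dv (vq n d i) (VEf n d V)) x * Dv (vp n d j) k x)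
      = ∑ i, ∑ j, Dv (vp n d i) h x *
          (Dv (vq n d j) (Dv (vq n d i) (VEf n d V)) x * Dv (vp n d j) k x) :=
    fun h k => Finset.sum_congr rfl fun i _ => Finset.mul_sum _ _ _
  rw [L f g, L g f, Finset.sum_comm]
  apply Finset.sum_congr rfl; intro j _
  apply Finset.sum_congr rfl; intro i _
  rw [Dv_comm (SM.vef hV) (vq n d j) (vq n d i) x]
  ring

theorem jacobi_VE (hV : ContDiff ℝ (⊤:ℕ∞) V) {f g : EE n d → ℝ} (hf : SM f) (hg : SM g)
    (x : EE n d) :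
    PBE (VEf n d V) (PBE f g) x
      = PBE (PBE (VEf n d V) f) g x + PBE f (PBE (VEf n d V) g) x := by
  have e1 : PBE (VEf n d V) f
      = fun y => ∑ i, Dv (vq n d i) (VEf n d V) y * Dv (vp n d i) f y :=
    funext fun y => pbe_ve hV f y
  have e2 : PBE (VEf n d V) g
      = fun y => ∑ i, Dv (vq n d i) (VEf n d V) y * Dv (vp n d i) g y :=
    funext fun y => pbe_ve hV g y
  have hAf : ∀ i : Fin n, SM (fun y => Dv (vq n d i) (VEf n d V) y * Dv (vp n d i) f y) :=
    fun i => (((SM.vef hV).dv _).mul (hf.dv _))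
  have hAg : ∀ i : Fin n, SM (fun y => Dv (vq n d i) (VEf n d V) y * Dv (vp n d i) g y) :=
    fun i => (((SM.vef hV).dv _).mul (hg.dv _))
  have s1 : ∑ i, Dv (vq n d i) (VEf n d V) x * Dv (vp n d i) (PBE f g) x
      = ∑ i, Dv (vq n d i) (VEf n d V) x
          * (PBE (Dv (vp n d i) f) g x + PBE f (Dv (vp n d i) g) x) :=
    Finset.sum_congr rfl fun i _ => by rw [Dv_PBE hf hg]
  have s2 : ∑ i, PBE (fun y => Dv (vq n d i) (VEf n d V) y * Dv (vp n d i) f y) g x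
      = ∑ i, (Dv (vq n d i) (VEf n d V) x * PBE (Dv (vp n d i) f) g x
          + Dv (vp n d i) f x *
            (∑ j, Dv (vq n d j) (Dv (vq n d i) (VEf n d V)) x * Dv (vp n d j) g x)) :=
    Finset.sum_congr rfl fun i _ => by
      rw [PBE_mul_left ((SM.vef hV).dv _) (hf.dv _) g x, pbe_qve hV]
  have s3 : ∑ i, PBE f (fun y => Dv (vq n d i) (VEf n d V) y * Dv (vp n d i) g y) x
      = ∑ i, (Dv (vq n d i) (VEf n d V) x * PBE f (Dv (vp n d i) g) x
          - Dv (vp n d i) g x *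
            (∑ j, Dv (vq n d j) (Dv (vq n d i) (VEf n d V)) x * Dv (vp n d j) f x)) :=
    Finset.sum_congr rfl fun i _ => by
      rw [PBE_mul_right f ((SM.vef hV).dv _) (hg.dv _) x,
        PBE_anti f (Dv (vq n d i) (VEf n d V)), pbe_qve hV]; ring
  rw [pbe_ve hV, s1, e1, e2, PBE_sum_left hAf g x, PBE_sum_right f hAg x, s2, s3]
  have s4 := schwarz_ve hV f g x
  simp only [mul_add, Finset.sum_add_distrib, Finset.sum_sub_distrib]
  linarith [s4]
theorem Dv_vp_pcmul {r : EE n d → ℝ} (hr : SM r) (i j : Fin n) (x : EE n d) :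
    Dv (vp n d j) (fun z => pc n d i z * r z) x
      = (if i = j then r x else 0) + pc n d i x * Dv (vp n d j) r x := by
  rw [Dv_mul (SM.pc i) hr, Dv_pc_vp]
  by_cases h : i = j <;> simp [h]

theorem Dv_vq_pcmul {r : EE n d → ℝ} (hr : SM r) (i : Fin n) (v : EE n d) (hv : v.2.1.2 i = 0)
    (x : EE n d) :
    Dv v (fun z => pc n d i z * r z) x = pc n d i x * Dv v r x := by
  rw [Dv_mul (SM.pc i) hr, Dv_pc, hv]; ring

/-- `∂_{pᵢ}` of the kinetic bracket. -/
theorem Dv_vp_pbe_ke {M : ℝ} (hM : M ≠ 0) {r : EE n d → ℝ} (hr : SM r) (i : Fin n)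
    (x : EE n d) :
    Dv (vp n d i) (PBE (KEf n d M) r) x
      = -(1/M) * (Dv (vq n d i) r x + ∑ j, pc n d j x * Dv (vp n d i) (Dv (vq n d j) r) x) := by
  have e : PBE (KEf n d M) r = fun y => -(1/M) * ∑ j, pc n d j y * Dv (vq n d j) r y :=
    funext fun y => pbe_ke M hM r y
  have hA : ∀ j : Fin n, SM (fun y => pc n d j y * Dv (vq n d j) r y) :=
    fun j => (SM.pc j).mul (hr.dv _)
  rw [e, Dv_cmul _ (SM.sum hA), Dv_sum hA]
  have s : ∑ j, Dv (vp n d i) (fun y => pc n d j y * Dv (vq n d j) r y) x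
      = ∑ j, ((if j = i then Dv (vq n d j) r x else 0)
          + pc n d j x * Dv (vp n d i) (Dv (vq n d j) r) x) :=
    Finset.sum_congr rfl fun j _ => Dv_vp_pcmul (hr.dv _) j i x
  rw [s, Finset.sum_add_distrib, Finset.sum_ite_eq' Finset.univ i]
  simp

theorem classical_KE {M : ℝ} (hM : M ≠ 0) {r : EE n d → ℝ} (hr : SM r) (x : EE n d) :
    ∑ i, Dv (vp n d i) (fun y => pc n d i y * PBE (KEf n d M) r y) x
        + PBE r (KEf n d M) x
      = PBE (KEf n d M)
          (fun y => ∑ j, Dv (vp n d j) (fun z => pc n d j z * r z) y) x := by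
  have hPB : SM (PBE (KEf n d M) r) := (SM.ke M).pbe hr
  have s1 : ∑ i, Dv (vp n d i) (fun y => pc n d i y * PBE (KEf n d M) r y) x
      = ∑ i, (PBE (KEf n d M) r x
          + pc n d i x * (-(1/M) * (Dv (vq n d i) r x
              + ∑ j, pc n d j x * Dv (vp n d i) (Dv (vq n d j) r) x))) := by
    apply Finset.sum_congr rfl; intro i _
    rw [Dv_vp_pcmul hPB i i x, Dv_vp_pbe_ke hM hr i x]
    simp
  have hA : ∀ j : Fin n, SM (fun z => pc n d j z * r z) := fun j => (SM.pc j).mul hr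
  have tQ : ∀ i : Fin n,
      Dv (vq n d i) (fun y => ∑ j, Dv (vp n d j) (fun z => pc n d j z * r z) y) x
        = ∑ j, (Dv (vq n d i) r x + pc n d j x * Dv (vp n d j) (Dv (vq n d i) r) x) := by
    intro i
    rw [Dv_sum (fun j => (hA j).dv _)]
    apply Finset.sum_congr rfl; intro j _
    rw [Dv_comm (hA j) (vq n d i) (vp n d j) x,
      Dv_congr (fun y => Dv_vq_pcmul hr j (vq n d i) rfl y) (vp n d j) x,
      Dv_vp_pcmul (hr.dv _) j j x]
    simp
  have s2 : PBE (KEf n d M)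
        (fun y => ∑ j, Dv (vp n d j) (fun z => pc n d j z * r z) y) x
      = -(1/M) * ∑ i, pc n d i x
          * ∑ j, (Dv (vq n d i) r x + pc n d j x * Dv (vp n d j) (Dv (vq n d i) r) x) := by
    rw [pbe_ke M hM]
    congr 1
    exact Finset.sum_congr rfl fun i _ => by rw [tQ i]
  have L : ∑ i, (PBE (KEf n d M) r x
        + pc n d i x * (-(1/M) * (Dv (vq n d i) r x
            + ∑ j, pc n d j x * Dv (vp n d i) (Dv (vq n d j) r) x)))
      = ∑ i, ((-(1/M) * ∑ j, pc n d j x * Dv (vq n d j) r x)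
          + (-(1/M) * (pc n d i x * Dv (vq n d i) r x)
            + -(1/M) * ∑ j, pc n d i x * (pc n d j x * Dv (vp n d i) (Dv (vq n d j) r) x))) := by
    apply Finset.sum_congr rfl; intro i _
    rw [pbe_ke M hM, ← Finset.mul_sum]
    ring
  have R : ∑ i, pc n d i x
        * ∑ j, (Dv (vq n d i) r x + pc n d j x * Dv (vp n d j) (Dv (vq n d i) r) x)
      = ∑ i, ((n : ℝ) * (pc n d i x * Dv (vq n d i) r x)
          + ∑ j, pc n d i x * (pc n d j x * Dv (vp n d j) (Dv (vq n d i) r) x)) := by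
    apply Finset.sum_congr rfl; intro i _
    rw [Finset.sum_add_distrib, Finset.sum_const, Finset.card_univ, Fintype.card_fin,
      nsmul_eq_mul, mul_add, Finset.mul_sum]
    ring
  have swap : ∑ i, ∑ j, pc n d i x * (pc n d j x * Dv (vp n d i) (Dv (vq n d j) r) x)
      = ∑ i, ∑ j, pc n d i x * (pc n d j x * Dv (vp n d j) (Dv (vq n d i) r) x) := by
    rw [Finset.sum_comm]
    apply Finset.sum_congr rfl; intro i _
    apply Finset.sum_congr rfl; intro j _
    ring
  rw [s1, s2, PBE_anti r, L, R, pbe_ke M hM]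
  conv_lhs => rw [Finset.sum_add_distrib, Finset.sum_add_distrib, Finset.sum_const,
    Finset.card_univ, Fintype.card_fin, nsmul_eq_mul,
    ← Finset.mul_sum Finset.univ (fun i => pc n d i x * Dv (vq n d i) r x) (-(1/M)),
    ← Finset.mul_sum Finset.univ
      (fun i => ∑ j, pc n d i x * (pc n d j x * Dv (vp n d i) (Dv (vq n d j) r) x)) (-(1/M))]
  conv_rhs => rw [Finset.sum_add_distrib,
    ← Finset.mul_sum Finset.univ (fun i => pc n d i x * Dv (vq n d i) r x) ((n:ℝ))]
  linear_combination (-(1/M)) * swap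

theorem classical_VE (hV : ContDiff ℝ (⊤:ℕ∞) V) {r : EE n d → ℝ} (hr : SM r) (x : EE n d) :
    ∑ i, Dv (vp n d i) (fun y => pc n d i y * PBE (VEf n d V) r y) x
        - PBE r (VEf n d V) x
      = PBE (VEf n d V)
          (fun y => ∑ j, Dv (vp n d j) (fun z => pc n d j z * r z) y) x := by
  have hPB : SM (PBE (VEf n d V) r) := (SM.vef hV).pbe hr
  have hA : ∀ j : Fin n, SM (fun z => pc n d j z * r z) := fun j => (SM.pc j).mul hr
  have dvp_pbe_ve : ∀ i : Fin n, Dv (vp n d i) (PBE (VEf n d V) r) x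
      = ∑ j, Dv (vq n d j) (VEf n d V) x * Dv (vp n d i) (Dv (vp n d j) r) x := by
    intro i
    have e : PBE (VEf n d V) r
        = fun y => ∑ j, Dv (vq n d j) (VEf n d V) y * Dv (vp n d j) r y :=
      funext fun y => pbe_ve hV r y
    have hB : ∀ j : Fin n, SM (fun y => Dv (vq n d j) (VEf n d V) y * Dv (vp n d j) r y) :=
      fun j => ((SM.vef hV).dv _).mul (hr.dv _)
    rw [e, Dv_sum hB]
    apply Finset.sum_congr rfl; intro j _
    rw [Dv_mul ((SM.vef hV).dv _) (hr.dv _), Dv_vp_qve hV]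
    ring
  have s1 : ∑ i, Dv (vp n d i) (fun y => pc n d i y * PBE (VEf n d V) r y) x
      = ∑ i, (PBE (VEf n d V) r x
          + ∑ j, pc n d i x * (Dv (vq n d j) (VEf n d V) x
              * Dv (vp n d i) (Dv (vp n d j) r) x)) := by
    apply Finset.sum_congr rfl; intro i _
    rw [Dv_vp_pcmul hPB i i x, dvp_pbe_ve i, Finset.mul_sum]
    simp
  have tP : ∀ i : Fin n,
      Dv (vp n d i) (fun y => ∑ j, Dv (vp n d j) (fun z => pc n d j z * r z) y) x
        = ((n:ℝ) + 1) * Dv (vp n d i) r x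
            + ∑ j, pc n d j x * Dv (vp n d i) (Dv (vp n d j) r) x := by
    intro i
    rw [Dv_sum (fun j => (hA j).dv _)]
    have inner : ∀ j : Fin n, Dv (vp n d i) (Dv (vp n d j) (fun z => pc n d j z * r z)) x
        = Dv (vp n d i) r x + ((if j = i then Dv (vp n d j) r x else 0)
            + pc n d j x * Dv (vp n d i) (Dv (vp n d j) r) x) := by
      intro j
      rw [Dv_congr (fun y => show Dv (vp n d j) (fun z => pc n d j z * r z) y
            = r y + pc n d j y * Dv (vp n d j) r y from by
          rw [Dv_vp_pcmul hr j j y]; simp) (vp n d i) x,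
        Dv_add hr ((SM.pc j).mul (hr.dv _)), Dv_vp_pcmul (hr.dv _) j i x]
    rw [Finset.sum_congr rfl fun j _ => inner j, Finset.sum_add_distrib,
      Finset.sum_add_distrib, Finset.sum_const, Finset.card_univ, Fintype.card_fin,
      nsmul_eq_mul, Finset.sum_ite_eq' Finset.univ i]
    simp only [Finset.mem_univ, if_true]
    ring
  have s2 : PBE (VEf n d V)
        (fun y => ∑ j, Dv (vp n d j) (fun z => pc n d j z * r z) y) x
      = ∑ i, (((n:ℝ) + 1) * (Dv (vq n d i) (VEf n d V) x * Dv (vp n d i) r x)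
          + ∑ j, Dv (vq n d i) (VEf n d V) x
              * (pc n d j x * Dv (vp n d i) (Dv (vp n d j) r) x)) := by
    rw [pbe_ve hV]
    apply Finset.sum_congr rfl; intro i _
    rw [tP i, mul_add, Finset.mul_sum]
    ring_nf
  have swap2 : ∑ i, ∑ j, pc n d i x * (Dv (vq n d j) (VEf n d V) x
        * Dv (vp n d i) (Dv (vp n d j) r) x)
      = ∑ i, ∑ j, Dv (vq n d i) (VEf n d V) x
          * (pc n d j x * Dv (vp n d i) (Dv (vp n d j) r) x) := by
    rw [Finset.sum_comm]
    apply Finset.sum_congr rfl; intro i _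
    apply Finset.sum_congr rfl; intro j _
    rw [Dv_comm hr (vp n d j) (vp n d i) x]
    ring
  rw [s1, s2, PBE_anti r, pbe_ve hV]
  conv_lhs => rw [Finset.sum_add_distrib, Finset.sum_const, Finset.card_univ,
    Fintype.card_fin, nsmul_eq_mul]
  conv_rhs => rw [Finset.sum_add_distrib,
    ← Finset.mul_sum Finset.univ
      (fun i => Dv (vq n d i) (VEf n d V) x * Dv (vp n d i) r x) ((n:ℝ) + 1)]
  linear_combination swap2

section Core
variable {V : (Fin n → ℝ) × (Fin d → ℝ) → ℝ}

theorem jacobi_HH {M : ℝ} (hM : M ≠ 0) (hV : ContDiff ℝ (⊤:ℕ∞) V)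
    {f g : EE n d → ℝ} (hf : SM f) (hg : SM g) (x : EE n d) :
    PBE (fun y => KEf n d M y + VEf n d V y) (PBE f g) x
      = PBE (PBE (fun y => KEf n d M y + VEf n d V y) f) g x + PBE f (PBE (fun y => KEf n d M y + VEf n d V y) g) x := by
  have h1 : PBE (fun y => KEf n d M y + VEf n d V y) f = fun y => PBE (KEf n d M) f y + PBE (VEf n d V) f y :=
    funext fun y => PBE_add_left (SM.ke M) (SM.vef hV) f y
  have h2 : PBE (fun y => KEf n d M y + VEf n d V y) g = fun y => PBE (KEf n d M) g y + PBE (VEf n d V) g y :=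
    funext fun y => PBE_add_left (SM.ke M) (SM.vef hV) g y
  rw [PBE_add_left (SM.ke M) (SM.vef hV) (PBE f g) x, jacobi_KE hM hf hg x,
    jacobi_VE hV hf hg x, h1, h2,
    PBE_add_left ((SM.ke M).pbe hf) ((SM.vef hV).pbe hf) g x,
    PBE_add_right f ((SM.ke M).pbe hg) ((SM.vef hV).pbe hg) x]
  ring

theorem classical_HH {M : ℝ} (hM : M ≠ 0) (hV : ContDiff ℝ (⊤:ℕ∞) V)
    {r : EE n d → ℝ} (hr : SM r) (x : EE n d) :
    ∑ i, Dv (vp n d i) (fun y => pc n d i y * PBE (fun y => KEf n d M y + VEf n d V y) r y) x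
        + PBE r (fun y => KEf n d M y - VEf n d V y) x
      = PBE (fun y => KEf n d M y + VEf n d V y) (fun y => ∑ j, Dv (vp n d j) (fun z => pc n d j z * r z) y) x := by
  have hPt : SM (fun y => ∑ j, Dv (vp n d j) (fun z => pc n d j z * r z) y) :=
    SM.sum fun j => ((SM.pc j).mul hr).dv _
  have s : ∑ i, Dv (vp n d i) (fun y => pc n d i y * PBE (fun y => KEf n d M y + VEf n d V y) r y) x
      = ∑ i, (Dv (vp n d i) (fun y => pc n d i y * PBE (KEf n d M) r y) x
          + Dv (vp n d i) (fun y => pc n d i y * PBE (VEf n d V) r y) x) := by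
    apply Finset.sum_congr rfl; intro i _
    rw [Dv_congr (fun y => show pc n d i y * PBE (fun y => KEf n d M y + VEf n d V y) r y
          = pc n d i y * PBE (KEf n d M) r y + pc n d i y * PBE (VEf n d V) r y from by
        rw [PBE_add_left (SM.ke M) (SM.vef hV) r y]; ring) (vp n d i) x,
      Dv_add ((SM.pc i).mul ((SM.ke M).pbe hr)) ((SM.pc i).mul ((SM.vef hV).pbe hr))]
  rw [s, PBE_sub_right r (SM.ke M) (SM.vef hV) x,
    PBE_add_left (SM.ke M) (SM.vef hV)
      (fun y => ∑ j, Dv (vp n d j) (fun z => pc n d j z * r z) y) x,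
    ← classical_KE hM hr x, ← classical_VE hV hr x, Finset.sum_add_distrib]
  ring

end Core

theorem core_continuity {V : (Fin n → ℝ) × (Fin d → ℝ) → ℝ} (m M ℏ : ℝ)
    (hm : m ≠ 0) (hM : M ≠ 0) (hV : ContDiff ℝ (⊤:ℕ∞) V)
    (𝒮 ℛ : EE n d → ℝ) (hS : SM 𝒮) (hR : SM ℛ) (hpos : ∀ y, 0 < ℛ y)
    (M1 : ∀ y, Dv (vt n d) 𝒮 y
        = (KEf n d M y - VEf n d V y + PBE (fun y => KEf n d M y + VEf n d V y) 𝒮 y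
            - 1/(2*m) * ∑ k, Dv (vx n d k) 𝒮 y * Dv (vx n d k) 𝒮 y)
          + ℏ^2/(2*m) * ((∑ k, Dv (vx n d k) (Dv (vx n d k) ℛ) y) * (ℛ y)⁻¹))
    (M2 : ∀ y, Dv (vt n d) (fun y => ℛ y * ℛ y) y
        = PBE (fun y => KEf n d M y + VEf n d V y) (fun y => ℛ y * ℛ y) y - 1/m * ∑ k, Dv (vx n d k) (fun z => (ℛ z * ℛ z) * Dv (vx n d k) 𝒮 z) y)
    (x : EE n d) :
    Dv (vt n d) (fun y => ℛ y * ℛ y + (∑ i, Dv (vp n d i) (fun z => pc n d i z * (ℛ z * ℛ z)) y) + PBE (fun y => ℛ y * ℛ y) 𝒮 y) x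
      = PBE (fun y => KEf n d M y + VEf n d V y) (fun y => ℛ y * ℛ y + (∑ i, Dv (vp n d i) (fun z => pc n d i z * (ℛ z * ℛ z)) y) + PBE (fun y => ℛ y * ℛ y) 𝒮 y) x - ∑ k, Dv (vx n d k) (fun y => 1/m * ((ℛ y * ℛ y) * Dv (vx n d k) 𝒮 y
      + (∑ i, Dv (vp n d i) (fun z => pc n d i z * ((ℛ z * ℛ z) * Dv (vx n d k) 𝒮 z)) y)
      + PBE (fun z => (ℛ z * ℛ z) * Dv (vx n d k) 𝒮 z) 𝒮 y
      - ℏ^2 * PBE ℛ (Dv (vx n d k) ℛ) y)) x := by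
  have hρ : SM (fun y => ℛ y * ℛ y) := hR.mul hR
  have hK : SM (KEf n d M) := SM.ke M
  have hVe : SM (VEf n d V) := SM.vef hV
  have hH : SM (fun y => KEf n d M y + VEf n d V y) := hK.add hVe
  have hu : ∀ k : Fin d, SM (Dv (vx n d k) 𝒮) := fun k => hS.dv _
  have hru : ∀ k : Fin d, SM (fun z => (ℛ z * ℛ z) * Dv (vx n d k) 𝒮 z) := fun k => hρ.mul (hS.dv _)
  have hW : SM (fun y => ∑ k, Dv (vx n d k) (fun z => (ℛ z * ℛ z) * Dv (vx n d k) 𝒮 z) y) := SM.sum fun k => (hru k).dv _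
  have hΔ : SM (fun y => ∑ k, Dv (vx n d k) (Dv (vx n d k) ℛ) y) := SM.sum fun k => (hR.dv _).dv _
  have hRne : ∀ y, ℛ y ≠ 0 := fun y => ne_of_gt (hpos y)
  have hRinv : SM (fun y => (ℛ y)⁻¹) := hR.inv hRne
  have hPt : SM (fun y => ∑ i, Dv (vp n d i) (fun z => pc n d i z * (ℛ z * ℛ z)) y) := SM.sum fun i => ((SM.pc i).mul hρ).dv _
  have hPBρS : SM (PBE (fun y => ℛ y * ℛ y) 𝒮) := hρ.pbe hS
  have hA : SM (PBE (fun y => KEf n d M y + VEf n d V y) (fun y => ℛ y * ℛ y)) := hH.pbe hρ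
  have hG : SM (fun y => ∑ k, Dv (vx n d k) 𝒮 y * Dv (vx n d k) 𝒮 y) := SM.sum fun k => (hu k).mul (hu k)
  have eρ : Dv (vt n d) (fun y => ℛ y * ℛ y)
      = fun y => PBE (fun y => KEf n d M y + VEf n d V y) (fun y => ℛ y * ℛ y) y - 1/m * ∑ k, Dv (vx n d k) (fun z => (ℛ z * ℛ z) * Dv (vx n d k) 𝒮 z) y :=
    funext M2
  have eS : Dv (vt n d) 𝒮
      = fun y => (KEf n d M y - VEf n d V y + PBE (fun y => KEf n d M y + VEf n d V y) 𝒮 y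
            - 1/(2*m) * ∑ k, Dv (vx n d k) 𝒮 y * Dv (vx n d k) 𝒮 y)
          + ℏ^2/(2*m) * ((∑ k, Dv (vx n d k) (Dv (vx n d k) ℛ) y) * (ℛ y)⁻¹) :=
    funext M1
  -- LHS expansion
  have t1 : Dv (vt n d) (fun y => ℛ y * ℛ y + (∑ i, Dv (vp n d i) (fun z => pc n d i z * (ℛ z * ℛ z)) y) + PBE (fun y => ℛ y * ℛ y) 𝒮 y) x
      = Dv (vt n d) (fun y => ℛ y * ℛ y) x + Dv (vt n d) (fun y => ∑ i, Dv (vp n d i) (fun z => pc n d i z * (ℛ z * ℛ z)) y) x + Dv (vt n d) (PBE (fun y => ℛ y * ℛ y) 𝒮) x := by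
    rw [Dv_add (hρ.add hPt) hPBρS, Dv_add hρ hPt]
  have t2 : Dv (vt n d) (fun y => ∑ i, Dv (vp n d i) (fun z => pc n d i z * (ℛ z * ℛ z)) y) x
      = ∑ i, Dv (vp n d i) (fun y => pc n d i y * Dv (vt n d) (fun y => ℛ y * ℛ y) y) x := by
    rw [Dv_sum (fun i => ((SM.pc i).mul hρ).dv _)]
    apply Finset.sum_congr rfl; intro i _
    rw [Dv_comm ((SM.pc i).mul hρ) (vt n d) (vp n d i) x,
      Dv_congr (fun y => Dv_vq_pcmul hρ i (vt n d) rfl y) (vp n d i) x]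
  have t3 : Dv (vt n d) (PBE (fun y => ℛ y * ℛ y) 𝒮) x
      = PBE (Dv (vt n d) (fun y => ℛ y * ℛ y)) 𝒮 x + PBE (fun y => ℛ y * ℛ y) (Dv (vt n d) 𝒮) x :=
    Dv_PBE hρ hS (vt n d) x
  rw [t1, t2, t3]
  simp only [eρ, eS]
  have t4 : ∑ i, Dv (vp n d i) (fun y => pc n d i y *
        (PBE (fun y => KEf n d M y + VEf n d V y) (fun y => ℛ y * ℛ y) y - 1/m * ∑ k, Dv (vx n d k) (fun z => (ℛ z * ℛ z) * Dv (vx n d k) 𝒮 z) y)) x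
      = ∑ i, (Dv (vp n d i) (fun y => pc n d i y * PBE (fun y => KEf n d M y + VEf n d V y) (fun y => ℛ y * ℛ y) y) x
          - 1/m * Dv (vp n d i)
              (fun y => pc n d i y * ∑ k, Dv (vx n d k) (fun z => (ℛ z * ℛ z) * Dv (vx n d k) 𝒮 z) y) x) := by
    apply Finset.sum_congr rfl; intro i _
    rw [Dv_congr (fun y => show pc n d i y *
          (PBE (fun y => KEf n d M y + VEf n d V y) (fun y => ℛ y * ℛ y) y - 1/m * ∑ k, Dv (vx n d k) (fun z => (ℛ z * ℛ z) * Dv (vx n d k) 𝒮 z) y)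
        = pc n d i y * PBE (fun y => KEf n d M y + VEf n d V y) (fun y => ℛ y * ℛ y) y
          - 1/m * (pc n d i y * ∑ k, Dv (vx n d k) (fun z => (ℛ z * ℛ z) * Dv (vx n d k) 𝒮 z) y) from by ring)
      (vp n d i) x,
      Dv_sub ((SM.pc i).mul hA) (SM.cmul _ ((SM.pc i).mul hW)),
      Dv_cmul _ ((SM.pc i).mul hW)]
  have t5 : PBE (fun y => PBE (fun y => KEf n d M y + VEf n d V y) (fun y => ℛ y * ℛ y) y
          - 1/m * ∑ k, Dv (vx n d k) (fun z => (ℛ z * ℛ z) * Dv (vx n d k) 𝒮 z) y) 𝒮 x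
      = PBE (PBE (fun y => KEf n d M y + VEf n d V y) (fun y => ℛ y * ℛ y)) 𝒮 x - 1/m * PBE (fun y => ∑ k, Dv (vx n d k) (fun z => (ℛ z * ℛ z) * Dv (vx n d k) 𝒮 z) y) 𝒮 x := by
    rw [PBE_sub_left hA (SM.cmul _ hW) 𝒮 x, PBE_cmul_left _ hW 𝒮 x]
  have t6 : PBE (fun y => ℛ y * ℛ y) (fun y => (KEf n d M y - VEf n d V y + PBE (fun y => KEf n d M y + VEf n d V y) 𝒮 y
            - 1/(2*m) * ∑ k, Dv (vx n d k) 𝒮 y * Dv (vx n d k) 𝒮 y)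
          + ℏ^2/(2*m) * ((∑ k, Dv (vx n d k) (Dv (vx n d k) ℛ) y) * (ℛ y)⁻¹)) x
      = (PBE (fun y => ℛ y * ℛ y) (KEf n d M) x - PBE (fun y => ℛ y * ℛ y) (VEf n d V) x
            + PBE (fun y => ℛ y * ℛ y) (PBE (fun y => KEf n d M y + VEf n d V y) 𝒮) x - 1/(2*m) * PBE (fun y => ℛ y * ℛ y) (fun y => ∑ k, Dv (vx n d k) 𝒮 y * Dv (vx n d k) 𝒮 y) x)
          + ℏ^2/(2*m) * PBE (fun y => ℛ y * ℛ y) (fun y =>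
              (∑ k, Dv (vx n d k) (Dv (vx n d k) ℛ) y) * (ℛ y)⁻¹) x := by
    rw [PBE_add_right (fun y => ℛ y * ℛ y) (((hK.sub hVe).add (hH.pbe hS)).sub (SM.cmul _ hG))
        (SM.cmul _ (hΔ.mul hRinv)) x,
      PBE_sub_right (fun y => ℛ y * ℛ y) ((hK.sub hVe).add (hH.pbe hS)) (SM.cmul _ hG) x,
      PBE_add_right (fun y => ℛ y * ℛ y) (hK.sub hVe) (hH.pbe hS) x,
      PBE_sub_right (fun y => ℛ y * ℛ y) hK hVe x,
      PBE_cmul_right (fun y => ℛ y * ℛ y) _ hG x,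
      PBE_cmul_right (fun y => ℛ y * ℛ y) _ (hΔ.mul hRinv) x]
  have q1 : PBE (fun y => ℛ y * ℛ y) (fun y => ∑ k, Dv (vx n d k) 𝒮 y * Dv (vx n d k) 𝒮 y) x
      = 2 * ∑ k, Dv (vx n d k) 𝒮 x * PBE (fun y => ℛ y * ℛ y) (Dv (vx n d k) 𝒮) x := by
    rw [PBE_sum_right (fun y => ℛ y * ℛ y) (fun k => (hu k).mul (hu k)) x,
      Finset.sum_congr rfl fun k (_ : k ∈ Finset.univ) =>
        PBE_mul_right (fun y => ℛ y * ℛ y) (hu k) (hu k) x,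
      Finset.mul_sum]
    exact Finset.sum_congr rfl fun k _ => by ring
  have q2 : PBE (fun y => ℛ y * ℛ y) (fun y =>
        (∑ k, Dv (vx n d k) (Dv (vx n d k) ℛ) y) * (ℛ y)⁻¹) x
      = 2 * PBE ℛ (fun y => ∑ k, Dv (vx n d k) (Dv (vx n d k) ℛ) y) x := by
    rw [PBE_mul_right (fun y => ℛ y * ℛ y) hΔ hRinv x, PBE_inv_right (fun y => ℛ y * ℛ y) hR hRne x,
      show PBE (fun y => ℛ y * ℛ y) ℛ x = 0 from by rw [PBE_mul_left hR hR ℛ x, PBE_self]; ring,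
      PBE_mul_left hR hR (fun y => ∑ k, Dv (vx n d k) (Dv (vx n d k) ℛ) y) x]
    field_simp [hRne x]
    ring
  rw [t4, t5, t6, q1, q2]
  -- RHS expansion
  have r1 : PBE (fun y => KEf n d M y + VEf n d V y) (fun y => ℛ y * ℛ y + (∑ i, Dv (vp n d i) (fun z => pc n d i z * (ℛ z * ℛ z)) y) + PBE (fun y => ℛ y * ℛ y) 𝒮 y) x
      = PBE (fun y => KEf n d M y + VEf n d V y) (fun y => ℛ y * ℛ y) x + PBE (fun y => KEf n d M y + VEf n d V y) (fun y => ∑ i, Dv (vp n d i) (fun z => pc n d i z * (ℛ z * ℛ z)) y) x + PBE (fun y => KEf n d M y + VEf n d V y) (PBE (fun y => ℛ y * ℛ y) 𝒮) x := by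
    rw [PBE_add_right (fun y => KEf n d M y + VEf n d V y) (hρ.add hPt) hPBρS x, PBE_add_right (fun y => KEf n d M y + VEf n d V y) hρ hPt x]
  have r2 : ∀ k : Fin d, Dv (vx n d k) (fun y => 1/m * ((ℛ y * ℛ y) * Dv (vx n d k) 𝒮 y
      + (∑ i, Dv (vp n d i) (fun z => pc n d i z * ((ℛ z * ℛ z) * Dv (vx n d k) 𝒮 z)) y)
      + PBE (fun z => (ℛ z * ℛ z) * Dv (vx n d k) 𝒮 z) 𝒮 y
      - ℏ^2 * PBE ℛ (Dv (vx n d k) ℛ) y)) x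
      = 1/m * ((Dv (vx n d k) (fun z => (ℛ z * ℛ z) * Dv (vx n d k) 𝒮 z) x
          + ∑ i, Dv (vp n d i)
              (fun y => pc n d i y * Dv (vx n d k) (fun z => (ℛ z * ℛ z) * Dv (vx n d k) 𝒮 z) y) x
          + (PBE (Dv (vx n d k) (fun z => (ℛ z * ℛ z) * Dv (vx n d k) 𝒮 z)) 𝒮 x
              + PBE (fun z => (ℛ z * ℛ z) * Dv (vx n d k) 𝒮 z) (Dv (vx n d k) 𝒮) x))
          - ℏ^2 * PBE ℛ (Dv (vx n d k) (Dv (vx n d k) ℛ)) x) := by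
    intro k
    have hb : SM (fun y => ∑ i, Dv (vp n d i)
        (fun z => pc n d i z * ((ℛ z * ℛ z) * Dv (vx n d k) 𝒮 z)) y) :=
      SM.sum fun i => ((SM.pc i).mul (hru k)).dv _
    have hc : SM (PBE (fun z => (ℛ z * ℛ z) * Dv (vx n d k) 𝒮 z) 𝒮) := (hru k).pbe hS
    have hd2 : SM (fun y => ℏ^2 * PBE ℛ (Dv (vx n d k) ℛ) y) :=
      SM.cmul _ (hR.pbe (hR.dv _))
    rw [Dv_cmul _ ((((hru k).add hb).add hc).sub hd2),
      Dv_sub (((hru k).add hb).add hc) hd2,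
      Dv_add ((hru k).add hb) hc, Dv_add (hru k) hb,
      Dv_cmul _ (hR.pbe (hR.dv _)), Dv_PBE hR (hR.dv _) (vx n d k) x,
      PBE_self, Dv_PBE (hru k) hS (vx n d k) x]
    have sb : Dv (vx n d k) (fun y => ∑ i, Dv (vp n d i)
          (fun z => pc n d i z * ((ℛ z * ℛ z) * Dv (vx n d k) 𝒮 z)) y) x
        = ∑ i, Dv (vp n d i)
            (fun y => pc n d i y * Dv (vx n d k) (fun z => (ℛ z * ℛ z) * Dv (vx n d k) 𝒮 z) y) x := by
      rw [Dv_sum (fun i => ((SM.pc i).mul (hru k)).dv _)]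
      apply Finset.sum_congr rfl; intro i _
      rw [Dv_comm ((SM.pc i).mul (hru k)) (vx n d k) (vp n d i) x,
        Dv_congr (fun y => Dv_vq_pcmul (hru k) i (vx n d k) rfl y) (vp n d i) x]
    rw [sb]
    ring
  have r3 : ∑ k, Dv (vx n d k) (fun y => 1/m * ((ℛ y * ℛ y) * Dv (vx n d k) 𝒮 y
      + (∑ i, Dv (vp n d i) (fun z => pc n d i z * ((ℛ z * ℛ z) * Dv (vx n d k) 𝒮 z)) y)
      + PBE (fun z => (ℛ z * ℛ z) * Dv (vx n d k) 𝒮 z) 𝒮 y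
      - ℏ^2 * PBE ℛ (Dv (vx n d k) ℛ) y)) x
      = 1/m * (((∑ k, Dv (vx n d k) (fun z => (ℛ z * ℛ z) * Dv (vx n d k) 𝒮 z) x)
          + ∑ i, Dv (vp n d i)
              (fun y => pc n d i y * ∑ k, Dv (vx n d k) (fun z => (ℛ z * ℛ z) * Dv (vx n d k) 𝒮 z) y) x
          + (PBE (fun y => ∑ k, Dv (vx n d k) (fun z => (ℛ z * ℛ z) * Dv (vx n d k) 𝒮 z) y) 𝒮 x
              + ∑ k, Dv (vx n d k) 𝒮 x * PBE (fun y => ℛ y * ℛ y) (Dv (vx n d k) 𝒮) x))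
          - ℏ^2 * PBE ℛ (fun y => ∑ k, Dv (vx n d k) (Dv (vx n d k) ℛ) y) x) := by
    rw [Finset.sum_congr rfl fun k (_ : k ∈ Finset.univ) => r2 k, ← Finset.mul_sum]
    congr 1
    have sb2 : ∑ k, ∑ i, Dv (vp n d i)
          (fun y => pc n d i y * Dv (vx n d k) (fun z => (ℛ z * ℛ z) * Dv (vx n d k) 𝒮 z) y) x
        = ∑ i, Dv (vp n d i)
            (fun y => pc n d i y * ∑ k, Dv (vx n d k) (fun z => (ℛ z * ℛ z) * Dv (vx n d k) 𝒮 z) y) x := by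
      rw [Finset.sum_comm]
      apply Finset.sum_congr rfl; intro i _
      rw [Dv_congr (fun y => (Finset.mul_sum Finset.univ
          (fun k => Dv (vx n d k) (fun z => (ℛ z * ℛ z) * Dv (vx n d k) 𝒮 z) y) (pc n d i y))) (vp n d i) x,
        Dv_sum (fun k => (SM.pc i).mul ((hru k).dv _))]
    have sc : ∑ k, PBE (Dv (vx n d k) (fun z => (ℛ z * ℛ z) * Dv (vx n d k) 𝒮 z)) 𝒮 x = PBE (fun y => ∑ k, Dv (vx n d k) (fun z => (ℛ z * ℛ z) * Dv (vx n d k) 𝒮 z) y) 𝒮 x :=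
      (PBE_sum_left (fun k => (hru k).dv _) 𝒮 x).symm
    have sd : ∑ k, PBE (fun z => (ℛ z * ℛ z) * Dv (vx n d k) 𝒮 z) (Dv (vx n d k) 𝒮) x
        = ∑ k, Dv (vx n d k) 𝒮 x * PBE (fun y => ℛ y * ℛ y) (Dv (vx n d k) 𝒮) x := by
      apply Finset.sum_congr rfl; intro k _
      rw [PBE_mul_left hρ (hu k) (Dv (vx n d k) 𝒮) x, PBE_self]
      ring
    have se : ∑ k, ℏ^2 * PBE ℛ (Dv (vx n d k) (Dv (vx n d k) ℛ)) x
        = ℏ^2 * PBE ℛ (fun y => ∑ k, Dv (vx n d k) (Dv (vx n d k) ℛ) y) x := by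
      rw [← Finset.mul_sum, PBE_sum_right ℛ (fun k => (hR.dv _).dv _) x]
    simp only [Finset.sum_add_distrib, Finset.sum_sub_distrib]
    rw [sb2, sc, sd, se]
  rw [r1, r3]
  -- final algebra
  have jac : PBE (fun y => KEf n d M y + VEf n d V y) (PBE (fun y => ℛ y * ℛ y) 𝒮) x
      = PBE (PBE (fun y => KEf n d M y + VEf n d V y) (fun y => ℛ y * ℛ y)) 𝒮 x + PBE (fun y => ℛ y * ℛ y) (PBE (fun y => KEf n d M y + VEf n d V y) 𝒮) x :=
    jacobi_HH hM hV hρ hS x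
  have cls : ∑ i, Dv (vp n d i) (fun y => pc n d i y * PBE (fun y => KEf n d M y + VEf n d V y) (fun y => ℛ y * ℛ y) y) x
        + (PBE (fun y => ℛ y * ℛ y) (KEf n d M) x - PBE (fun y => ℛ y * ℛ y) (VEf n d V) x)
      = PBE (fun y => KEf n d M y + VEf n d V y) (fun y => ∑ i, Dv (vp n d i) (fun z => pc n d i z * (ℛ z * ℛ z)) y) x := by
    rw [← PBE_sub_right (fun y => ℛ y * ℛ y) hK hVe x]
    exact classical_HH hM hV hρ x
  rw [Finset.sum_sub_distrib, ← Finset.mul_sum]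
  linear_combination cls - jac
theorem bdq {F : EE n d → ℝ} (hF : SM F) (i : Fin n) (t : ℝ) (w : Hyb n d) :
    dqH i (fun w' => F (t, w')) w = Dv (vq n d i) F (t, w) := dv_fix_t hF t w _

theorem bdp {F : EE n d → ℝ} (hF : SM F) (i : Fin n) (t : ℝ) (w : Hyb n d) :
    dpH i (fun w' => F (t, w')) w = Dv (vp n d i) F (t, w) := dv_fix_t hF t w _

theorem bdx {F : EE n d → ℝ} (hF : SM F) (k : Fin d) (t : ℝ) (w : Hyb n d) :
    dxH k (fun w' => F (t, w')) w = Dv (vx n d k) F (t, w) := dv_fix_t hF t w _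

theorem bdt {F : EE n d → ℝ} (hF : SM F) (t : ℝ) (w : Hyb n d) :
    deriv (fun s => F (s, w)) t = Dv (vt n d) F (t, w) := dv_fix_w hF t w

theorem bpb {F G : EE n d → ℝ} (hF : SM F) (hG : SM G) (t : ℝ) (w : Hyb n d) :
    pbH (fun w' => F (t, w')) (fun w' => G (t, w')) w = PBE F G (t, w) := by
  simp only [pbH, PBE]
  exact Finset.sum_congr rfl fun i _ => by
    rw [bdq hF, bdp hG, bdp hF, bdq hG]

theorem blap {F : EE n d → ℝ} (hF : SM F) (t : ℝ) (w : Hyb n d) :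
    laplxH (fun w' => F (t, w')) w = ∑ k, Dv (vx n d k) (Dv (vx n d k) F) (t, w) := by
  simp only [laplxH]
  apply Finset.sum_congr rfl; intro k _
  rw [show (fun w' => dxH k (fun w'' => F (t, w'')) w')
      = (fun w' => Dv (vx n d k) F (t, w')) from funext fun w' => bdx hF k t w',
    bdx (hF.dv _) k t w]

theorem PBE_congrl {f f' : EE n d → ℝ} (h : ∀ y, f y = f' y) (g : EE n d → ℝ) (x : EE n d) :
    PBE f g x = PBE f' g x := by
  simp only [PBE]
  exact Finset.sum_congr rfl fun i _ => by
    rw [Dv_congr h (vq n d i) x, Dv_congr h (vp n d i) x]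
/-- Hybrid quantum–classical continuity equation: if `(𝒮, ℛ)`
solve the hybrid Madelung equations, then the hybrid density
`𝒟 = ℛ² + Σᵢ ∂_{pᵢ}(pᵢℛ²) + {ℛ², 𝒮}` satisfies
`∂ₜ𝒟 = {H_I, 𝒟} − Σₖ ∂_{xᵏ}(J_Q)ₖ`. -/
theorem hybrid_continuity (n d : ℕ) (m M ℏ : ℝ) (hm : 0 < m) (hM : 0 < M) (hℏ : 0 < ℏ)
    (V : (Fin n → ℝ) × (Fin d → ℝ) → ℝ) (hV : ContDiff ℝ (⊤ : ℕ∞) V)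
    (𝒮 ℛ : ℝ × Hyb n d → ℝ)
    (h𝒮 : ContDiff ℝ (⊤ : ℕ∞) 𝒮) (hℛ : ContDiff ℝ (⊤ : ℕ∞) ℛ)
    (hpos : ∀ t w, 0 < ℛ (t, w))
    (hMad1 : ∀ (t : ℝ) (w : Hyb n d),
      deriv (fun s => 𝒮 (s, w)) t
          + (∑ k, dxH k (fun w' => 𝒮 (t, w')) w ^ 2) / (2 * m)
          - (ℏ ^ 2 / (2 * m)) * laplxH (fun w' => ℛ (t, w')) w / ℛ (t, w)
        = LI M V w + pbH (HI M V) (fun w' => 𝒮 (t, w')) w)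
    (hMad2 : ∀ (t : ℝ) (w : Hyb n d),
      deriv (fun s => ℛ (s, w)) t
          + (1 / (2 * m * ℛ (t, w))) *
              (∑ k, dxH k (fun w' => ℛ (t, w') ^ 2 * dxH k (fun w'' => 𝒮 (t, w'')) w') w)
        = pbH (HI M V) (fun w' => ℛ (t, w')) w) :
    ∀ (t : ℝ) (w : Hyb n d),
      deriv (fun s => hybDen (fun w' => ℛ (s, w')) (fun w' => 𝒮 (s, w')) w) t
        = pbH (HI M V)
            (fun w' => hybDen (fun w'' => ℛ (t, w'')) (fun w'' => 𝒮 (t, w'')) w') w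
          - ∑ k, dxH k
              (fun w' => JQ m ℏ (fun w'' => ℛ (t, w'')) (fun w'' => 𝒮 (t, w'')) k w') w := by
  intro t w

  -- smoothness
  have hS : SM 𝒮 := h𝒮
  have hR : SM ℛ := hℛ
  have hposE : ∀ y : EE n d, 0 < ℛ y := fun y => hpos y.1 y.2
  have hRne : ∀ y : EE n d, ℛ y ≠ 0 := fun y => ne_of_gt (hposE y)
  have hρ : SM (fun y => ℛ y * ℛ y) := hR.mul hR
  have hρ2 : SM (fun y : EE n d => ℛ y ^ 2) := hR.pow 2
  have hK : SM (KEf n d M) := SM.ke M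
  have hVe : SM (VEf n d V) := SM.vef hV
  have hHH : SM (fun y => KEf n d M y + VEf n d V y) := hK.add hVe
  have hu : ∀ k : Fin d, SM (Dv (vx n d k) 𝒮) := fun k => hS.dv _
  have hru : ∀ k : Fin d, SM (fun z => (ℛ z * ℛ z) * Dv (vx n d k) 𝒮 z) := fun k => hρ.mul (hS.dv _)
  have hPt : SM (fun y => ∑ i, Dv (vp n d i) (fun z => pc n d i z * (ℛ z * ℛ z)) y) := SM.sum fun i => ((SM.pc i).mul hρ).dv _
  have hDDE_SM : SM (fun y => ℛ y * ℛ y + (∑ i, Dv (vp n d i) (fun z => pc n d i z * (ℛ z * ℛ z)) y) + PBE (fun y => ℛ y * ℛ y) 𝒮 y) := (hρ.add hPt).add (hρ.pbe hS)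
  have hJJ : ∀ k : Fin d, SM (fun y => 1/m * ((ℛ y * ℛ y) * Dv (vx n d k) 𝒮 y
      + (∑ i, Dv (vp n d i) (fun z => pc n d i z * ((ℛ z * ℛ z) * Dv (vx n d k) 𝒮 z)) y)
      + PBE (fun z => (ℛ z * ℛ z) * Dv (vx n d k) 𝒮 z) 𝒮 y
      - ℏ^2 * PBE ℛ (Dv (vx n d k) ℛ) y)) := fun k =>
    SM.cmul _ ((((hru k).add (SM.sum fun i => ((SM.pc i).mul (hru k)).dv _)).add
      ((hru k).pbe hS)).sub (SM.cmul _ (hR.pbe (hR.dv _))))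
  -- hybDen bridge
  have hDDE : ∀ (s : ℝ) (w' : Hyb n d),
      hybDen (fun w'' => ℛ (s, w'')) (fun w'' => 𝒮 (s, w'')) w' = (fun y => ℛ y * ℛ y + (∑ i, Dv (vp n d i) (fun z => pc n d i z * (ℛ z * ℛ z)) y) + PBE (fun y => ℛ y * ℛ y) 𝒮 y) (s, w') := by
    intro s w'
    simp only [hybDen]
    have e1 : ∀ i : Fin n, dpH i (fun w'' => w''.1.2 i * ℛ (s, w'') ^ 2) w'
        = Dv (vp n d i) (fun z => pc n d i z * (ℛ z * ℛ z)) (s, w') := by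
      intro i
      have b := bdp (F := fun y : EE n d => y.2.1.2 i * ℛ y ^ 2)
        ((SM.pc i).mul hρ2) i s w'
      rw [b]
      exact Dv_congr (fun y => by show y.2.1.2 i * ℛ y ^ 2 = _; rw [pow_two]; rfl) _ _
    have e2 : pbH (fun w'' => ℛ (s, w'') ^ 2) (fun w'' => 𝒮 (s, w'')) w'
        = PBE (fun y => ℛ y * ℛ y) 𝒮 (s, w') := by
      have b := bpb (F := fun y : EE n d => ℛ y ^ 2) (G := 𝒮) hρ2 hS s w'
      rw [b]
      exact PBE_congrl (fun y => pow_two (ℛ y)) 𝒮 _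
    rw [Finset.sum_congr rfl fun i (_ : i ∈ Finset.univ) => e1 i, e2, pow_two]
  -- JQ bridge
  have hJQ : ∀ (k : Fin d) (w' : Hyb n d),
      JQ m ℏ (fun w'' => ℛ (t, w'')) (fun w'' => 𝒮 (t, w'')) k w' = (fun y => 1/m * ((ℛ y * ℛ y) * Dv (vx n d k) 𝒮 y
      + (∑ i, Dv (vp n d i) (fun z => pc n d i z * ((ℛ z * ℛ z) * Dv (vx n d k) 𝒮 z)) y)
      + PBE (fun z => (ℛ z * ℛ z) * Dv (vx n d k) 𝒮 z) 𝒮 y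
      - ℏ^2 * PBE ℛ (Dv (vx n d k) ℛ) y)) (t, w') := by
    intro k w'
    simp only [JQ]
    have ex : ∀ w'' : Hyb n d, dxH k (fun w''' => 𝒮 (t, w''')) w'' = Dv (vx n d k) 𝒮 (t, w'') :=
      fun w'' => bdx hS k t w''
    have ea : ℛ (t, w') ^ 2 * dxH k (fun w'' => 𝒮 (t, w'')) w'
        = (ℛ (t, w') * ℛ (t, w')) * Dv (vx n d k) 𝒮 (t, w') := by
      rw [ex w', pow_two]
    have eb : ∀ i : Fin n,
        dpH i (fun w'' => w''.1.2 i * (ℛ (t, w'') ^ 2 * dxH k (fun w''' => 𝒮 (t, w''')) w'')) w'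
        = Dv (vp n d i) (fun z => pc n d i z * ((ℛ z * ℛ z) * Dv (vx n d k) 𝒮 z)) (t, w') := by
      intro i
      rw [show (fun w'' => w''.1.2 i * (ℛ (t, w'') ^ 2 * dxH k (fun w''' => 𝒮 (t, w''')) w''))
          = (fun w'' => w''.1.2 i * (ℛ (t, w'') ^ 2 * Dv (vx n d k) 𝒮 (t, w''))) from
        funext fun w'' => by rw [ex w'']]
      have b := bdp (F := fun y : EE n d => y.2.1.2 i * (ℛ y ^ 2 * Dv (vx n d k) 𝒮 y))
        ((SM.pc i).mul (hρ2.mul (hu k))) i t w'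
      rw [b]
      exact Dv_congr (fun y => by
        show y.2.1.2 i * (ℛ y ^ 2 * Dv (vx n d k) 𝒮 y) = _; rw [pow_two]; rfl) _ _
    have ec : pbH (fun w'' => ℛ (t, w'') ^ 2 * dxH k (fun w''' => 𝒮 (t, w''')) w'')
          (fun w'' => 𝒮 (t, w'')) w'
        = PBE (fun z => (ℛ z * ℛ z) * Dv (vx n d k) 𝒮 z) 𝒮 (t, w') := by
      rw [show (fun w'' => ℛ (t, w'') ^ 2 * dxH k (fun w''' => 𝒮 (t, w''')) w'')
          = (fun w'' => ℛ (t, w'') ^ 2 * Dv (vx n d k) 𝒮 (t, w'')) from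
        funext fun w'' => by rw [ex w'']]
      have b := bpb (F := fun y : EE n d => ℛ y ^ 2 * Dv (vx n d k) 𝒮 y) (G := 𝒮)
        (hρ2.mul (hu k)) hS t w'
      rw [b]
      exact PBE_congrl (fun y => by rw [pow_two]) 𝒮 _
    have ed : pbH (fun w'' => ℛ (t, w'')) (fun w'' => dxH k (fun w''' => ℛ (t, w''')) w'') w'
        = PBE ℛ (Dv (vx n d k) ℛ) (t, w') := by
      rw [show (fun w'' => dxH k (fun w''' => ℛ (t, w''')) w'')
          = (fun w'' => Dv (vx n d k) ℛ (t, w'')) from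
        funext fun w'' => bdx hR k t w'']
      exact bpb hR (hR.dv _) t w'
    rw [ea, Finset.sum_congr rfl fun i (_ : i ∈ Finset.univ) => eb i, ec, ed]
  -- Madelung 1 in core form
  have M1c : ∀ y : EE n d, Dv (vt n d) 𝒮 y
      = (KEf n d M y - VEf n d V y + PBE (fun y => KEf n d M y + VEf n d V y) 𝒮 y
          - 1/(2*m) * ∑ k, Dv (vx n d k) 𝒮 y * Dv (vx n d k) 𝒮 y)
        + ℏ^2/(2*m) * ((∑ k, Dv (vx n d k) (Dv (vx n d k) ℛ) y) * (ℛ y)⁻¹) := by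
    rintro ⟨s, w'⟩
    have h := hMad1 s w'
    rw [bdt hS s w', blap hR s w'] at h
    have e1 : ∑ k, dxH k (fun w'' => 𝒮 (s, w'')) w' ^ 2
        = ∑ k, Dv (vx n d k) 𝒮 (s, w') * Dv (vx n d k) 𝒮 (s, w') := by
      apply Finset.sum_congr rfl; intro k _
      rw [bdx hS k s w', pow_two]
    have e2 : pbH (HI M V) (fun w'' => 𝒮 (s, w'')) w' = PBE (fun y => KEf n d M y + VEf n d V y) 𝒮 (s, w') :=
      bpb hHH hS s w'
    rw [e1, e2] at h
    have e3 : LI M V w' = KEf n d M (s, w') - VEf n d V (s, w') := rfl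
    rw [e3] at h
    have hRy := hRne (s, w')
    field_simp at h ⊢
    linarith [h]
  -- Madelung 2 in core form
  have M2c : ∀ y : EE n d, Dv (vt n d) (fun y => ℛ y * ℛ y) y
      = PBE (fun y => KEf n d M y + VEf n d V y) (fun y => ℛ y * ℛ y) y - 1/m * ∑ k, Dv (vx n d k) (fun z => (ℛ z * ℛ z) * Dv (vx n d k) 𝒮 z) y := by
    rintro ⟨s, w'⟩
    have h := hMad2 s w'
    rw [bdt hR s w'] at h
    have e1 : ∑ k, dxH k (fun w'' => ℛ (s, w'') ^ 2
          * dxH k (fun w''' => 𝒮 (s, w''')) w'') w'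
        = ∑ k, Dv (vx n d k) (fun z => (ℛ z * ℛ z) * Dv (vx n d k) 𝒮 z) (s, w') := by
      apply Finset.sum_congr rfl; intro k _
      rw [show (fun w'' => ℛ (s, w'') ^ 2 * dxH k (fun w''' => 𝒮 (s, w''')) w'')
          = (fun w'' => ℛ (s, w'') ^ 2 * Dv (vx n d k) 𝒮 (s, w'')) from
        funext fun w'' => by rw [bdx hS k s w'']]
      have b := bdx (F := fun y : EE n d => ℛ y ^ 2 * Dv (vx n d k) 𝒮 y)
        (hρ2.mul (hu k)) k s w'
      rw [b]
      exact Dv_congr (fun y => by rw [pow_two]) _ _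
    have e2 : pbH (HI M V) (fun w'' => ℛ (s, w'')) w' = PBE (fun y => KEf n d M y + VEf n d V y) ℛ (s, w') :=
      bpb hHH hR s w'
    rw [e1, e2] at h
    have eL : Dv (vt n d) (fun y => ℛ y * ℛ y) (s, w')
        = Dv (vt n d) ℛ (s, w') * ℛ (s, w') + ℛ (s, w') * Dv (vt n d) ℛ (s, w') :=
      Dv_mul hR hR _ _
    have eR : PBE (fun y => KEf n d M y + VEf n d V y) (fun y => ℛ y * ℛ y) (s, w')
        = ℛ (s, w') * PBE (fun y => KEf n d M y + VEf n d V y) ℛ (s, w') + ℛ (s, w') * PBE (fun y => KEf n d M y + VEf n d V y) ℛ (s, w') :=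
      PBE_mul_right (fun y => KEf n d M y + VEf n d V y) hR hR _
    rw [eL, eR]
    have hRy := hRne (s, w')
    have h' : Dv (vt n d) ℛ (s, w')
        = PBE (fun y => KEf n d M y + VEf n d V y) ℛ (s, w')
          - (1 / (2 * m * ℛ (s, w'))) * ∑ k, Dv (vx n d k) (fun z => (ℛ z * ℛ z) * Dv (vx n d k) 𝒮 z) (s, w') := by
      linarith [h]
    rw [h']
    field_simp
    ring
  -- assemble
  have KEY := core_continuity (n := n) (d := d) m M ℏ (ne_of_gt hm) (ne_of_gt hM) hV 𝒮 ℛ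
    hS hR hposE M1c M2c (t, w)
  rw [show (fun s => hybDen (fun w' => ℛ (s, w')) (fun w' => 𝒮 (s, w')) w)
      = (fun s => (fun y => ℛ y * ℛ y + (∑ i, Dv (vp n d i) (fun z => pc n d i z * (ℛ z * ℛ z)) y) + PBE (fun y => ℛ y * ℛ y) 𝒮 y) (s, w)) from funext fun s => hDDE s w]
  have lhs1 : deriv (fun s => (fun y => ℛ y * ℛ y + (∑ i, Dv (vp n d i) (fun z => pc n d i z * (ℛ z * ℛ z)) y) + PBE (fun y => ℛ y * ℛ y) 𝒮 y) (s, w)) t = Dv (vt n d) (fun y => ℛ y * ℛ y + (∑ i, Dv (vp n d i) (fun z => pc n d i z * (ℛ z * ℛ z)) y) + PBE (fun y => ℛ y * ℛ y) 𝒮 y) (t, w) :=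
    bdt hDDE_SM t w
  rw [lhs1]
  rw [show (fun w' => hybDen (fun w'' => ℛ (t, w'')) (fun w'' => 𝒮 (t, w'')) w')
      = (fun w' => (fun y => ℛ y * ℛ y + (∑ i, Dv (vp n d i) (fun z => pc n d i z * (ℛ z * ℛ z)) y) + PBE (fun y => ℛ y * ℛ y) 𝒮 y) (t, w')) from funext fun w' => hDDE t w']
  have rhs1 : pbH (HI M V) (fun w' => (fun y => ℛ y * ℛ y + (∑ i, Dv (vp n d i) (fun z => pc n d i z * (ℛ z * ℛ z)) y) + PBE (fun y => ℛ y * ℛ y) 𝒮 y) (t, w')) w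
      = PBE (fun y => KEf n d M y + VEf n d V y) (fun y => ℛ y * ℛ y + (∑ i, Dv (vp n d i) (fun z => pc n d i z * (ℛ z * ℛ z)) y) + PBE (fun y => ℛ y * ℛ y) 𝒮 y) (t, w) := bpb hHH hDDE_SM t w
  rw [rhs1]
  have rhs2 : ∑ k, dxH k
        (fun w' => JQ m ℏ (fun w'' => ℛ (t, w'')) (fun w'' => 𝒮 (t, w'')) k w') w
      = ∑ k, Dv (vx n d k) (fun y => 1/m * ((ℛ y * ℛ y) * Dv (vx n d k) 𝒮 y
      + (∑ i, Dv (vp n d i) (fun z => pc n d i z * ((ℛ z * ℛ z) * Dv (vx n d k) 𝒮 z)) y)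
      + PBE (fun z => (ℛ z * ℛ z) * Dv (vx n d k) 𝒮 z) 𝒮 y
      - ℏ^2 * PBE ℛ (Dv (vx n d k) ℛ) y)) (t, w) := by
    apply Finset.sum_congr rfl; intro k _
    rw [show (fun w' => JQ m ℏ (fun w'' => ℛ (t, w'')) (fun w'' => 𝒮 (t, w'')) k w')
        = (fun w' => (fun y => 1/m * ((ℛ y * ℛ y) * Dv (vx n d k) 𝒮 y
      + (∑ i, Dv (vp n d i) (fun z => pc n d i z * ((ℛ z * ℛ z) * Dv (vx n d k) 𝒮 z)) y)
      + PBE (fun z => (ℛ z * ℛ z) * Dv (vx n d k) 𝒮 z) 𝒮 y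
      - ℏ^2 * PBE ℛ (Dv (vx n d k) ℛ) y)) (t, w')) from funext fun w' => hJQ k w']
    exact bdx (hJJ k) k t w
  rw [rhs2]
  exact KEY
end
end

section
/- Classical equivariance of the hybrid density operator: let η : ℝ²ⁿ → ℝ²ⁿ be a smooth diffeomorphism and φ : ℝ²ⁿ → ℝ a smooth function satisfying η*𝒜 + dφ = 𝒜, i.e. for every z ∈ ℝ²ⁿ and tangent vector v, 𝒜_{η(z)}(Dη(z)v) + Dφ(z)v = 𝒜_z(v), where 𝒜_z(δq,δp) := Σᵢ pᵢ δqⁱ. For smooth Υ : ℝ²ⁿ → ℂᵏ define (UΥ)(z) := Υ(η⁻¹(z)) · exp(−i φ(η⁻¹(z))/ħ). Then for every z ∈ ℝ²ⁿ, 𝒟̂(UΥ)(z) = 𝒟̂(Υ)(η⁻¹(z)); that is, the hybrid density operator of the transformed wavefunction is the pushforward of the original one by η (the Jacobian factor being 1 since η is symplectic). -/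
open Complex

noncomputable section

variable {n : ℕ}

variable {k : ℕ}

/-- The (finite-dimensional quantum sector) hybrid density operator, encoded
entrywise: `𝒟̂(Υ)(z) = ΥΥ* + Σᵢ ∂_{pᵢ}(pᵢ ΥΥ*) + iℏ Σᵢ (∂_{qⁱ}Υ ∂_{pᵢ}Υ* − ∂_{pᵢ}Υ ∂_{qⁱ}Υ*)`. -/
noncomputable def Dhat (ℏ : ℝ) (Υ : PS n → Fin k → ℂ) (z : PS n) (a b : Fin k) : ℂ :=
  Υ z a * (starRingEnd ℂ) (Υ z b)
    + ∑ i, dp i (fun w => (w.2 i : ℂ) * (Υ w a * (starRingEnd ℂ) (Υ w b))) z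
    + Complex.I * ℏ *
        ∑ i, (dq i (fun w => Υ w a) z * (starRingEnd ℂ) (dp i (fun w => Υ w b) z)
          - dp i (fun w => Υ w a) z * (starRingEnd ℂ) (dq i (fun w => Υ w b) z))

/-- The canonical one-form `𝒜_z(δq, δp) = Σᵢ pᵢ δqⁱ` on phase space. -/
noncomputable def Acan (z v : PS n) : ℝ := ∑ i, z.2 i * v.1 i

-- ===== auxiliary material =====
section Aux

def eqv (n : ℕ) (i : Fin n) : PS n := (Pi.single i 1, 0)
def epv (n : ℕ) (i : Fin n) : PS n := (0, Pi.single i 1)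
def om {n : ℕ} (u v : PS n) : ℝ := ∑ i, (u.1 i * v.2 i - u.2 i * v.1 i)

lemma om_eqv {n : ℕ} (a : PS n) (i : Fin n) : om a (eqv n i) = -(a.2 i) := by
  simp [om, eqv, Pi.single_apply]
lemma om_epv {n : ℕ} (a : PS n) (i : Fin n) : om a (epv n i) = a.1 i := by
  simp [om, epv, Pi.single_apply]
lemma om_inj {n : ℕ} {a b : PS n} (h : ∀ u, om a u = om b u) : a = b := by
  apply Prod.ext
  · funext i; have := h (epv n i); rwa [om_epv, om_epv] at this
  · funext i; have := h (eqv n i); rw [om_eqv, om_eqv] at this; linarith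
lemma lin_eval {n : ℕ} {F : Type*} [NormedAddCommGroup F] [NormedSpace ℝ F]
    (u : PS n →L[ℝ] F) (v : PS n) :
    u v = (∑ i, v.1 i • u (eqv n i)) + ∑ i, v.2 i • u (epv n i) := by
  have hv : v = (∑ i, v.1 i • eqv n i) + ∑ i, v.2 i • epv n i := by
    apply Prod.ext <;>
      simp [eqv, epv, Prod.fst_sum, Prod.snd_sum, ← Pi.single_smul,
        smul_eq_mul, mul_one, Finset.univ_sum_single]
  conv_lhs => rw [hv]
  simp

lemma dOf {E F : Type*} [NormedAddCommGroup E] [NormedSpace ℝ E] [NormedAddCommGroup F]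
    [NormedSpace ℝ F] {f : E → F} (hf : ContDiff ℝ (⊤ : ℕ∞) f) : Differentiable ℝ f :=
  hf.differentiable (by simp)

lemma d2Of {E F : Type*} [NormedAddCommGroup E] [NormedSpace ℝ E] [NormedAddCommGroup F]
    [NormedSpace ℝ F] {f : E → F} (hf : ContDiff ℝ (⊤ : ℕ∞) f) :
    ContDiff ℝ (⊤ : ℕ∞) (fderiv ℝ f) :=
  hf.fderiv_right (by exact_mod_cast le_top)

lemma symp_of_contact {n : ℕ} {η : PS n → PS n} {φ : PS n → ℝ}
    (hη : ContDiff ℝ (⊤ : ℕ∞) η) (hφ : ContDiff ℝ (⊤ : ℕ∞) φ)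
    (hcontact : ∀ z v, Acan (η z) (fderiv ℝ η z v) + fderiv ℝ φ z v = Acan z v) :
    ∀ w u v, om (fderiv ℝ η w u) (fderiv ℝ η w v) = om u v := by
  intro w u v
  set ηq : Fin n → PS n → ℝ := fun i w => (η w).1 i with hηq
  set ηp : Fin n → PS n → ℝ := fun i w => (η w).2 i with hηp
  have hq : ∀ i, ContDiff ℝ (⊤ : ℕ∞) (ηq i) := fun i => contDiff_pi.mp hη.fst i
  have hp : ∀ i, ContDiff ℝ (⊤ : ℕ∞) (ηp i) := fun i => contDiff_pi.mp hη.snd i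
  have hproj_q : ∀ i w' v', (fderiv ℝ η w' v').1 i = fderiv ℝ (ηq i) w' v' := by
    intro i w' v'
    have h : fderiv ℝ (ηq i) w' = ((ContinuousLinearMap.proj i).comp
        (ContinuousLinearMap.fst ℝ (Fin n → ℝ) (Fin n → ℝ))).comp (fderiv ℝ η w') :=
      (((ContinuousLinearMap.proj i).comp
        (ContinuousLinearMap.fst ℝ (Fin n → ℝ) (Fin n → ℝ))).hasFDerivAt.comp w'
        (dOf hη w').hasFDerivAt).fderiv
    rw [h]; rfl
  have hproj_p : ∀ i w' v', (fderiv ℝ η w' v').2 i = fderiv ℝ (ηp i) w' v' := by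
    intro i w' v'
    have h : fderiv ℝ (ηp i) w' = ((ContinuousLinearMap.proj i).comp
        (ContinuousLinearMap.snd ℝ (Fin n → ℝ) (Fin n → ℝ))).comp (fderiv ℝ η w') :=
      (((ContinuousLinearMap.proj i).comp
        (ContinuousLinearMap.snd ℝ (Fin n → ℝ) (Fin n → ℝ))).hasFDerivAt.comp w'
        (dOf hη w').hasFDerivAt).fderiv
    rw [h]; rfl
  set Hq : Fin n → PS n →L[ℝ] PS n →L[ℝ] ℝ := fun i => fderiv ℝ (fderiv ℝ (ηq i)) w with hHq
  set Hφ : PS n →L[ℝ] PS n →L[ℝ] ℝ := fderiv ℝ (fderiv ℝ φ) w with hHφ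
  have hsymm_q : ∀ i a b, Hq i a b = Hq i b a := fun i a b =>
    second_derivative_symmetric (fun y => (dOf (hq i) y).hasFDerivAt)
      ((dOf (d2Of (hq i)) w).hasFDerivAt) a b
  have hsymm_φ : ∀ a b, Hφ a b = Hφ b a := fun a b =>
    second_derivative_symmetric (fun y => (dOf hφ y).hasFDerivAt)
      ((dOf (d2Of hφ) w).hasFDerivAt) a b
  have key : ∀ u' v',
      (∑ i, (ηp i w * Hq i u' v' + fderiv ℝ (ηq i) w v' * fderiv ℝ (ηp i) w u'))
        + Hφ u' v' = ∑ i, u'.2 i * v'.1 i := by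
    intro u' v'
    have hF : HasFDerivAt (fun w' => (∑ i, ηp i w' * fderiv ℝ (ηq i) w' v') + fderiv ℝ φ w' v')
        ((∑ i, (ηp i w • ((ContinuousLinearMap.apply ℝ ℝ v').comp (Hq i))
            + fderiv ℝ (ηq i) w v' • fderiv ℝ (ηp i) w))
          + (ContinuousLinearMap.apply ℝ ℝ v').comp Hφ) w := by
      apply HasFDerivAt.add
      · apply HasFDerivAt.fun_sum
        intro i _
        exact (dOf (hp i) w).hasFDerivAt.mul
          ((ContinuousLinearMap.apply ℝ ℝ v').hasFDerivAt.comp w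
            (dOf (d2Of (hq i)) w).hasFDerivAt)
      · exact (ContinuousLinearMap.apply ℝ ℝ v').hasFDerivAt.comp w
          (dOf (d2Of hφ) w).hasFDerivAt
    have hG : HasFDerivAt (fun w' : PS n => ∑ i, w'.2 i * v'.1 i)
        (∑ i, v'.1 i • ((ContinuousLinearMap.proj i).comp (ContinuousLinearMap.snd ℝ _ _) :
          PS n →L[ℝ] ℝ)) w := by
      apply HasFDerivAt.fun_sum
      intro i _
      exact (((ContinuousLinearMap.proj i).comp
        (ContinuousLinearMap.snd ℝ (Fin n → ℝ) (Fin n → ℝ))).hasFDerivAt).mul_const (v'.1 i)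
    have hfg : (fun w' => (∑ i, ηp i w' * fderiv ℝ (ηq i) w' v') + fderiv ℝ φ w' v')
        = (fun w' : PS n => ∑ i, w'.2 i * v'.1 i) := by
      funext w'
      have hc := hcontact w' v'
      simp only [Acan] at hc
      rw [← hc]
      congr 1
      exact Finset.sum_congr rfl fun i _ => by rw [hproj_q]
    have hG' : HasFDerivAt (fun w' => (∑ i, ηp i w' * fderiv ℝ (ηq i) w' v') + fderiv ℝ φ w' v')
        (∑ i, v'.1 i • ((ContinuousLinearMap.proj i).comp (ContinuousLinearMap.snd ℝ _ _) :
          PS n →L[ℝ] ℝ)) w := by rw [hfg]; exact hG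
    have hun := hF.unique hG'
    have happ := congrFun (congrArg (fun (L : PS n →L[ℝ] ℝ) => (L : PS n → ℝ)) hun) u'
    simpa [Finset.sum_apply, mul_comm] using happ
  have k1 := key u v
  have k2 := key v u
  rw [Finset.sum_add_distrib] at k1 k2
  rw [show (∑ i, ηp i w * Hq i v u) = ∑ i, ηp i w * Hq i u v from
    Finset.sum_congr rfl fun i _ => by rw [hsymm_q], hsymm_φ v u] at k2
  simp only [om]
  rw [Finset.sum_sub_distrib, Finset.sum_sub_distrib]
  have e1 : ∑ i, (fderiv ℝ η w u).1 i * (fderiv ℝ η w v).2 i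
      = ∑ i, fderiv ℝ (ηq i) w u * fderiv ℝ (ηp i) w v :=
    Finset.sum_congr rfl fun i _ => by rw [hproj_q, hproj_p]
  have e2 : ∑ i, (fderiv ℝ η w u).2 i * (fderiv ℝ η w v).1 i
      = ∑ i, fderiv ℝ (ηq i) w v * fderiv ℝ (ηp i) w u :=
    Finset.sum_congr rfl fun i _ => by rw [hproj_q, hproj_p]; ring
  rw [e1, e2]
  have e3 : ∑ i, u.1 i * v.2 i = ∑ i, v.2 i * u.1 i :=
    Finset.sum_congr rfl fun i _ => by ring
  rw [e3]
  linarith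

section linalg
variable {n : ℕ} {T S : PS n →L[ℝ] PS n}
  (hST : ∀ v, S (T v) = v) (hTS : ∀ v, T (S v) = v)
  (hsympS : ∀ u v, om (S u) (S v) = om u v)

include hST hsympS in
lemma sympT : ∀ u v, om (T u) (T v) = om u v := by
  intro u v
  have := hsympS (T u) (T v)
  rw [hST, hST] at this
  exact this.symm

def Xi {n : ℕ} (ξ : PS n →L[ℝ] ℝ) : PS n := (fun i => ξ (epv n i), fun i => -ξ (eqv n i))

lemma om_Xi {n : ℕ} (ξ : PS n →L[ℝ] ℝ) (v : PS n) : om (Xi ξ) v = ξ v := by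
  rw [lin_eval ξ v, om]
  rw [← Finset.sum_add_distrib]
  exact Finset.sum_congr rfl fun i _ => by simp [Xi, smul_eq_mul]; ring

lemma om_Xi_Xi {n : ℕ} (ξ ζ : PS n →L[ℝ] ℝ) :
    om (Xi ξ) (Xi ζ) = ∑ i, (ξ (eqv n i) * ζ (epv n i) - ξ (epv n i) * ζ (eqv n i)) := by
  rw [om]
  exact Finset.sum_congr rfl fun i _ => by simp [Xi]; ring

include hST hTS hsympS in
lemma Xi_comp (ξ : PS n →L[ℝ] ℝ) : Xi (ξ.comp T) = S (Xi ξ) := by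
  apply om_inj
  intro u
  rw [om_Xi]
  have h1 : om (S (Xi ξ)) u = om (S (Xi ξ)) (S (T u)) := by rw [hST]
  rw [h1, hsympS, om_Xi]
  rfl

include hST hTS hsympS in
lemma biv (ξ ζ : PS n →L[ℝ] ℝ) :
    ∑ i, (ξ (T (eqv n i)) * ζ (T (epv n i)) - ξ (T (epv n i)) * ζ (T (eqv n i)))
      = ∑ i, (ξ (eqv n i) * ζ (epv n i) - ξ (epv n i) * ζ (eqv n i)) := by
  have h1 : ∑ i, (ξ (T (eqv n i)) * ζ (T (epv n i)) - ξ (T (epv n i)) * ζ (T (eqv n i)))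
      = om (Xi (ξ.comp T)) (Xi (ζ.comp T)) := by
    rw [om_Xi_Xi]; rfl
  rw [h1, Xi_comp hST hTS hsympS, Xi_comp hST hTS hsympS, hsympS, om_Xi_Xi]

include hST hTS hsympS in
lemma bivC (L M : PS n →L[ℝ] ℂ) :
    ∑ i, (L (T (eqv n i)) * M (T (epv n i)) - L (T (epv n i)) * M (T (eqv n i)))
      = ∑ i, (L (eqv n i) * M (epv n i) - L (epv n i) * M (eqv n i)) := by
  have hrr := biv hST hTS hsympS (Complex.reCLM.comp L) (Complex.reCLM.comp M)
  have hii := biv hST hTS hsympS (Complex.imCLM.comp L) (Complex.imCLM.comp M)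
  have hri := biv hST hTS hsympS (Complex.reCLM.comp L) (Complex.imCLM.comp M)
  have hir := biv hST hTS hsympS (Complex.imCLM.comp L) (Complex.reCLM.comp M)
  simp only [ContinuousLinearMap.coe_comp', Function.comp_apply, Complex.reCLM_apply,
    Complex.imCLM_apply, Finset.sum_sub_distrib] at hrr hii hri hir
  apply Complex.ext
  · simp only [Complex.re_sum, Complex.sub_re, Complex.mul_re, Finset.sum_sub_distrib]
    linarith
  · simp only [Complex.im_sum, Complex.sub_im, Complex.mul_im, Finset.sum_sub_distrib,
      Finset.sum_add_distrib]
    linarith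

include hST hTS hsympS in
lemma transport (z w0 : PS n) (Lφ : PS n →L[ℝ] ℝ)
    (hc : ∀ u, Acan z (S u) + Lφ u = Acan w0 u) :
    T ((fun i => -(Lφ (T (epv n i))), fun i => z.2 i + Lφ (T (eqv n i))) : PS n)
      = ((0 : Fin n → ℝ), w0.2) := by
  set Yv : PS n := (fun i => -(Lφ (T (epv n i))), fun i => z.2 i + Lφ (T (eqv n i))) with hYv
  apply om_inj
  intro u
  have h1 : om (T Yv) u = om Yv (S u) := by
    rw [show u = T (S u) from (hTS u).symm]
    rw [sympT hST hsympS]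
    rw [hTS]
  have hLu : Lφ u = (∑ i, (S u).1 i * Lφ (T (eqv n i))) + ∑ i, (S u).2 i * Lφ (T (epv n i)) := by
    have h2 : Lφ u = (Lφ.comp T) (S u) := by rw [ContinuousLinearMap.comp_apply, hTS]
    rw [h2, lin_eval (Lφ.comp T) (S u)]
    simp [smul_eq_mul]
  have hsplit : ∀ i, Yv.1 i * (S u).2 i - Yv.2 i * (S u).1 i
      = -(z.2 i * (S u).1 i) - (S u).1 i * Lφ (T (eqv n i)) - (S u).2 i * Lφ (T (epv n i)) := by
    intro i
    simp only [hYv]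
    ring
  have h3 : om Yv (S u) = -(Acan z (S u) + Lφ u) := by
    rw [om, Acan, hLu]
    rw [show (∑ i, (Yv.1 i * (S u).2 i - Yv.2 i * (S u).1 i))
        = ∑ i, (-(z.2 i * (S u).1 i) - (S u).1 i * Lφ (T (eqv n i))
            - (S u).2 i * Lφ (T (epv n i)))
      from Finset.sum_congr rfl fun i _ => hsplit i]
    simp only [Finset.sum_sub_distrib, Finset.sum_neg_distrib]
    ring
  rw [h1, h3, hc u, om, Acan]
  rw [← Finset.sum_neg_distrib]
  exact Finset.sum_congr rfl fun i _ => by simp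

end linalg

lemma hc1 (ℏ : ℝ) (hℏ : ℏ ≠ 0) : I * (ℏ:ℂ) * (-(I/(ℏ:ℂ))) = 1 := by
  have h0 : (ℏ:ℂ) ≠ 0 := Complex.ofReal_ne_zero.2 hℏ
  field_simp
  linear_combination (-1:ℂ) * Complex.I_sq

lemma hc2 (ℏ : ℝ) (hℏ : ℏ ≠ 0) : I * (ℏ:ℂ) * (I/(ℏ:ℂ)) = -1 := by
  have h0 : (ℏ:ℂ) ≠ 0 := Complex.ofReal_ne_zero.2 hℏ
  field_simp
  linear_combination Complex.I_sq

lemma expunit (ℏ r : ℝ) :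
    Complex.exp (-(I/(ℏ:ℂ)) * (r:ℂ)) * (starRingEnd ℂ) (Complex.exp (-(I/(ℏ:ℂ)) * (r:ℂ))) = 1 := by
  rw [← Complex.exp_conj, ← Complex.exp_add]
  rw [show (-(I/(ℏ:ℂ)) * (r:ℂ)) + (starRingEnd ℂ) (-(I/(ℏ:ℂ)) * (r:ℂ)) = 0 by
    simp [map_neg, map_div₀, Complex.conj_I, Complex.conj_ofReal]; ring]
  exact Complex.exp_zero

lemma prodcancel {ℏ r : ℝ} (x y : ℂ) :
    (x * Complex.exp (-(I/(ℏ:ℂ)) * (r:ℂ))) *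
      (starRingEnd ℂ) (y * Complex.exp (-(I/(ℏ:ℂ)) * (r:ℂ))) = x * (starRingEnd ℂ) y := by
  rw [map_mul]
  calc (x * Complex.exp (-(I/(ℏ:ℂ)) * (r:ℂ))) *
      ((starRingEnd ℂ) y * (starRingEnd ℂ) (Complex.exp (-(I/(ℏ:ℂ)) * (r:ℂ))))
      = (x * (starRingEnd ℂ) y) * (Complex.exp (-(I/(ℏ:ℂ)) * (r:ℂ)) *
          (starRingEnd ℂ) (Complex.exp (-(I/(ℏ:ℂ)) * (r:ℂ)))) := by ring
    _ = x * (starRingEnd ℂ) y := by rw [expunit, mul_one]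

lemma bkey (ℏ : ℝ) (hℏ : ℏ ≠ 0) (Ya Yb Ea A A2 B B2 : ℂ) (g1 g2 : ℝ)
    (hEE : Ea * (starRingEnd ℂ) Ea = 1) :
    I * (ℏ:ℂ) * ((Ya * (Ea * (-(I/(ℏ:ℂ)) * (g1:ℂ))) + Ea * A)
        * (starRingEnd ℂ) (Yb * (Ea * (-(I/(ℏ:ℂ)) * (g2:ℂ))) + Ea * B2)
      - (Ya * (Ea * (-(I/(ℏ:ℂ)) * (g2:ℂ))) + Ea * A2)
        * (starRingEnd ℂ) (Yb * (Ea * (-(I/(ℏ:ℂ)) * (g1:ℂ))) + Ea * B))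
    = I * (ℏ:ℂ) * (A * (starRingEnd ℂ) B2 - A2 * (starRingEnd ℂ) B)
      - (starRingEnd ℂ) Yb * (A * (g2:ℂ) - A2 * (g1:ℂ))
      + Ya * ((g1:ℂ) * (starRingEnd ℂ) B2 - (g2:ℂ) * (starRingEnd ℂ) B) := by
  simp only [map_add, map_mul, map_neg, map_div₀, Complex.conj_I, Complex.conj_ofReal,
    neg_div, neg_neg]
  calc I * (ℏ:ℂ) * ((Ya * (Ea * (-(I/(ℏ:ℂ)) * (g1:ℂ))) + Ea * A)
        * ((starRingEnd ℂ) Yb * ((starRingEnd ℂ) Ea * (I/(ℏ:ℂ) * (g2:ℂ)))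
            + (starRingEnd ℂ) Ea * (starRingEnd ℂ) B2)
      - (Ya * (Ea * (-(I/(ℏ:ℂ)) * (g2:ℂ))) + Ea * A2)
        * ((starRingEnd ℂ) Yb * ((starRingEnd ℂ) Ea * (I/(ℏ:ℂ) * (g1:ℂ)))
            + (starRingEnd ℂ) Ea * (starRingEnd ℂ) B))
      = (Ea * (starRingEnd ℂ) Ea) *
          ((I * (ℏ:ℂ)) * (A * (starRingEnd ℂ) B2 - A2 * (starRingEnd ℂ) B)
            + (I * (ℏ:ℂ) * (-(I/(ℏ:ℂ)))) *
                (Ya * ((g1:ℂ) * (starRingEnd ℂ) B2 - (g2:ℂ) * (starRingEnd ℂ) B))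
            + (I * (ℏ:ℂ) * (I/(ℏ:ℂ))) *
                ((starRingEnd ℂ) Yb * (A * (g2:ℂ) - A2 * (g1:ℂ)))) := by
        ring
    _ = _ := by rw [hEE, hc1 ℏ hℏ, hc2 ℏ hℏ]; ring

end Aux

set_option maxHeartbeats 2000000 in
/-- Classical equivariance of the hybrid density operator
under strict contact transformations: with `(UΥ)(z) = Υ(η⁻¹ z) exp(−iφ(η⁻¹ z)/ℏ)`,
one has `𝒟̂(UΥ)(z) = 𝒟̂(Υ)(η⁻¹ z)`. -/
theorem hybrid_density_contact_equivariance (n k : ℕ) (ℏ : ℝ) (hℏ : 0 < ℏ)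
    (η ηinv : PS n → PS n)
    (hη : ContDiff ℝ (⊤ : ℕ∞) η) (hηinv : ContDiff ℝ (⊤ : ℕ∞) ηinv)
    (hli : Function.LeftInverse ηinv η) (hri : Function.RightInverse ηinv η)
    (φ : PS n → ℝ) (hφ : ContDiff ℝ (⊤ : ℕ∞) φ)
    (hcontact : ∀ z v, Acan (η z) (fderiv ℝ η z v) + fderiv ℝ φ z v = Acan z v)
    (Υ : PS n → Fin k → ℂ) (hΥ : ContDiff ℝ (⊤ : ℕ∞) Υ) :
    ∀ (z : PS n) (a b : Fin k),
      Dhat ℏ (fun w c => Υ (ηinv w) c * Complex.exp (-(Complex.I * φ (ηinv w) / ℏ))) z a b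
        = Dhat ℏ Υ (ηinv z) a b := by
  intro z a b
  have hne : ℏ ≠ 0 := hℏ.ne'
  simp only [Dhat]
  simp only [show ∀ r : ℝ, -(Complex.I * (r:ℂ) / (ℏ:ℂ)) = -(I/(ℏ:ℂ)) * (r:ℂ) from
    fun r => by ring]
  simp only [prodcancel]
  set w0 : PS n := ηinv z with hw0
  -- basic derivative data
  have hψ : HasFDerivAt ηinv (fderiv ℝ ηinv z) z := (dOf hηinv z).hasFDerivAt
  set T : PS n →L[ℝ] PS n := fderiv ℝ ηinv z with hT
  set S : PS n →L[ℝ] PS n := fderiv ℝ η w0 with hS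
  have hSd : HasFDerivAt η S w0 := (dOf hη w0).hasFDerivAt
  have hST : ∀ v, S (T v) = v := by
    have hcomp : HasFDerivAt (fun w => η (ηinv w)) (S.comp T) z := hSd.comp z hψ
    have hfun : (fun w => η (ηinv w)) = fun w : PS n => w := funext hri
    have huniq : S.comp T = ContinuousLinearMap.id ℝ (PS n) := by
      apply HasFDerivAt.unique hcomp
      rw [hfun]; exact hasFDerivAt_id z
    intro v
    have := congrFun (congrArg (fun (L : PS n →L[ℝ] PS n) => (L : PS n → PS n)) huniq) v
    simpa using this
  have hTS : ∀ v, T (S v) = v := by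
    have hψ' : HasFDerivAt ηinv T (η w0) := by rw [show η w0 = z from hri z]; exact hψ
    have hcomp : HasFDerivAt (fun w => ηinv (η w)) (T.comp S) w0 := hψ'.comp w0 hSd
    have hfun : (fun w => ηinv (η w)) = fun w : PS n => w := funext hli
    have huniq : T.comp S = ContinuousLinearMap.id ℝ (PS n) := by
      apply HasFDerivAt.unique hcomp
      rw [hfun]; exact hasFDerivAt_id w0
    intro v
    have := congrFun (congrArg (fun (L : PS n →L[ℝ] PS n) => (L : PS n → PS n)) huniq) v
    simpa using this
  have hsympS : ∀ u v, om (S u) (S v) = om u v := fun u v =>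
    symp_of_contact hη hφ hcontact w0 u v
  -- component linear maps
  set La : PS n →L[ℝ] ℂ := fderiv ℝ (fun w => Υ w a) w0 with hLa
  set Lb : PS n →L[ℝ] ℂ := fderiv ℝ (fun w => Υ w b) w0 with hLb
  set Lφ : PS n →L[ℝ] ℝ := fderiv ℝ φ w0 with hLφ
  have hΥa : ContDiff ℝ (⊤ : ℕ∞) (fun w => Υ w a) := contDiff_pi.mp hΥ a
  have hΥb : ContDiff ℝ (⊤ : ℕ∞) (fun w => Υ w b) := contDiff_pi.mp hΥ b
  have hΥaψ : HasFDerivAt (fun w => Υ (ηinv w) a) (La.comp T) z :=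
    (dOf hΥa w0).hasFDerivAt.comp z hψ
  have hΥbψ : HasFDerivAt (fun w => Υ (ηinv w) b) (Lb.comp T) z :=
    (dOf hΥb w0).hasFDerivAt.comp z hψ
  have hφψ : HasFDerivAt (fun w => φ (ηinv w)) (Lφ.comp T) z :=
    (dOf hφ w0).hasFDerivAt.comp z hψ
  set Ea : ℂ := Complex.exp (-(I/(ℏ:ℂ)) * ((φ w0 : ℝ) : ℂ)) with hEa
  have hM : HasFDerivAt (fun w => (-(I/(ℏ:ℂ))) * ((φ (ηinv w) : ℝ) : ℂ))
      (((-(I/(ℏ:ℂ))) • Complex.ofRealCLM).comp (Lφ.comp T)) z :=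
    (((-(I/(ℏ:ℂ))) • Complex.ofRealCLM).hasFDerivAt).comp z hφψ
  have hexp : HasFDerivAt (fun w => Complex.exp ((-(I/(ℏ:ℂ))) * ((φ (ηinv w) : ℝ) : ℂ)))
      (Ea • (((-(I/(ℏ:ℂ))) • Complex.ofRealCLM).comp (Lφ.comp T))) z := hM.cexp
  have hVa : HasFDerivAt
      (fun w => Υ (ηinv w) a * Complex.exp ((-(I/(ℏ:ℂ))) * ((φ (ηinv w) : ℝ) : ℂ)))
      (Υ w0 a • (Ea • (((-(I/(ℏ:ℂ))) • Complex.ofRealCLM).comp (Lφ.comp T)))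
        + Ea • (La.comp T)) z := hΥaψ.mul hexp
  have hVb : HasFDerivAt
      (fun w => Υ (ηinv w) b * Complex.exp ((-(I/(ℏ:ℂ))) * ((φ (ηinv w) : ℝ) : ℂ)))
      (Υ w0 b • (Ea • (((-(I/(ℏ:ℂ))) • Complex.ofRealCLM).comp (Lφ.comp T)))
        + Ea • (Lb.comp T)) z := hΥbψ.mul hexp
  have hconjb : HasFDerivAt (fun w => (starRingEnd ℂ) (Υ w b))
      ((Complex.conjCLE.toContinuousLinearMap).comp Lb) w0 :=
    (Complex.conjCLE.toContinuousLinearMap.hasFDerivAt).comp w0 (dOf hΥb w0).hasFDerivAt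
  have hFw0 : HasFDerivAt (fun w => Υ w a * (starRingEnd ℂ) (Υ w b))
      (Υ w0 a • ((Complex.conjCLE.toContinuousLinearMap).comp Lb)
        + (starRingEnd ℂ) (Υ w0 b) • La) w0 :=
    (dOf hΥa w0).hasFDerivAt.mul hconjb
  have hFψ : HasFDerivAt (fun w => Υ (ηinv w) a * (starRingEnd ℂ) (Υ (ηinv w) b))
      ((Υ w0 a • ((Complex.conjCLE.toContinuousLinearMap).comp Lb)
        + (starRingEnd ℂ) (Υ w0 b) • La).comp T) z := hFw0.comp z hψ
  have hcoord : ∀ (i : Fin n) (y : PS n), HasFDerivAt (fun w : PS n => ((w.2 i : ℝ) : ℂ))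
      (Complex.ofRealCLM.comp ((ContinuousLinearMap.proj i).comp
        (ContinuousLinearMap.snd ℝ (Fin n → ℝ) (Fin n → ℝ)))) y := fun i y =>
    (Complex.ofRealCLM.comp ((ContinuousLinearMap.proj i).comp
      (ContinuousLinearMap.snd ℝ (Fin n → ℝ) (Fin n → ℝ)))).hasFDerivAt
  -- value computations
  have vdqa : ∀ i, dq i
      (fun w => Υ (ηinv w) a * Complex.exp ((-(I/(ℏ:ℂ))) * ((φ (ηinv w) : ℝ) : ℂ))) z
      = Υ w0 a * (Ea * (-(I/(ℏ:ℂ)) * ((Lφ (T (Pi.single i 1, 0)) : ℝ) : ℂ)))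
        + Ea * La (T (Pi.single i 1, 0)) := by
    intro i
    simp only [dq]
    rw [hVa.fderiv]
    simp
  have vdpa : ∀ i, dp i
      (fun w => Υ (ηinv w) a * Complex.exp ((-(I/(ℏ:ℂ))) * ((φ (ηinv w) : ℝ) : ℂ))) z
      = Υ w0 a * (Ea * (-(I/(ℏ:ℂ)) * ((Lφ (T (0, Pi.single i 1)) : ℝ) : ℂ)))
        + Ea * La (T (0, Pi.single i 1)) := by
    intro i
    simp only [dp]
    rw [hVa.fderiv]
    simp
  have vdqb : ∀ i, dq i
      (fun w => Υ (ηinv w) b * Complex.exp ((-(I/(ℏ:ℂ))) * ((φ (ηinv w) : ℝ) : ℂ))) z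
      = Υ w0 b * (Ea * (-(I/(ℏ:ℂ)) * ((Lφ (T (Pi.single i 1, 0)) : ℝ) : ℂ)))
        + Ea * Lb (T (Pi.single i 1, 0)) := by
    intro i
    simp only [dq]
    rw [hVb.fderiv]
    simp
  have vdpb : ∀ i, dp i
      (fun w => Υ (ηinv w) b * Complex.exp ((-(I/(ℏ:ℂ))) * ((φ (ηinv w) : ℝ) : ℂ))) z
      = Υ w0 b * (Ea * (-(I/(ℏ:ℂ)) * ((Lφ (T (0, Pi.single i 1)) : ℝ) : ℂ)))
        + Ea * Lb (T (0, Pi.single i 1)) := by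
    intro i
    simp only [dp]
    rw [hVb.fderiv]
    simp
  have vpz : ∀ i, dp i
      (fun w => ((w.2 i : ℝ) : ℂ) * (Υ (ηinv w) a * (starRingEnd ℂ) (Υ (ηinv w) b))) z
      = ((z.2 i : ℝ) : ℂ) * (Υ w0 a * (starRingEnd ℂ) (Lb (T (0, Pi.single i 1)))
          + (starRingEnd ℂ) (Υ w0 b) * La (T (0, Pi.single i 1)))
        + Υ w0 a * (starRingEnd ℂ) (Υ w0 b) := by
    intro i
    simp only [dp]
    rw [((hcoord i z).fun_mul hFψ).fderiv]
    simp [Pi.single_eq_same]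
    ring
  have vpw0 : ∀ i, dp i (fun w => ((w.2 i : ℝ) : ℂ) * (Υ w a * (starRingEnd ℂ) (Υ w b))) w0
      = ((w0.2 i : ℝ) : ℂ) * (Υ w0 a * (starRingEnd ℂ) (Lb (0, Pi.single i 1))
          + (starRingEnd ℂ) (Υ w0 b) * La (0, Pi.single i 1))
        + Υ w0 a * (starRingEnd ℂ) (Υ w0 b) := by
    intro i
    simp only [dp]
    rw [((hcoord i w0).fun_mul hFw0).fderiv]
    simp [Pi.single_eq_same]
    ring
  have vdqaw0 : ∀ i, dq i (fun w => Υ w a) w0 = La (Pi.single i 1, 0) := fun i => by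
    simp only [dq]
    rfl
  have vdpaw0 : ∀ i, dp i (fun w => Υ w a) w0 = La (0, Pi.single i 1) := fun i => by
    simp only [dp]
    rfl
  have vdqbw0 : ∀ i, dq i (fun w => Υ w b) w0 = Lb (Pi.single i 1, 0) := fun i => by
    simp only [dq]
    rfl
  have vdpbw0 : ∀ i, dp i (fun w => Υ w b) w0 = Lb (0, Pi.single i 1) := fun i => by
    simp only [dp]
    rfl
  -- key geometric identities
  have KB := bivC hST hTS hsympS La (Complex.conjCLE.toContinuousLinearMap.comp Lb)
  simp only [ContinuousLinearMap.coe_comp', Function.comp_apply,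
    ContinuousLinearEquiv.coe_coe, Complex.conjCLE_apply, eqv, epv,
    Finset.sum_sub_distrib] at KB
  have hcAc : ∀ u, Acan z (S u) + Lφ u = Acan w0 u := by
    intro u
    have h := hcontact w0 u
    rw [show η w0 = z from hri z] at h
    exact h
  have Ktr := transport hST hTS hsympS z w0 Lφ hcAc
  have KLa : (La.comp T) ((fun i => -(Lφ (T (epv n i))), fun i => z.2 i + Lφ (T (eqv n i))) : PS n)
      = La ((0 : Fin n → ℝ), w0.2) := congrArg (⇑La) Ktr
  have KLb : ((Complex.conjCLE.toContinuousLinearMap.comp Lb).comp T)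
        ((fun i => -(Lφ (T (epv n i))), fun i => z.2 i + Lφ (T (eqv n i))) : PS n)
      = (Complex.conjCLE.toContinuousLinearMap.comp Lb) ((0 : Fin n → ℝ), w0.2) :=
    congrArg (⇑(Complex.conjCLE.toContinuousLinearMap.comp Lb)) Ktr
  rw [lin_eval ((La.comp T)) _, lin_eval La ((0 : Fin n → ℝ), w0.2)] at KLa
  rw [lin_eval (((Complex.conjCLE.toContinuousLinearMap.comp Lb).comp T)) _,
    lin_eval (Complex.conjCLE.toContinuousLinearMap.comp Lb) ((0 : Fin n → ℝ), w0.2)] at KLb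
  simp only [ContinuousLinearMap.coe_comp', Function.comp_apply,
    ContinuousLinearEquiv.coe_coe, Complex.conjCLE_apply, eqv, epv,
    Complex.real_smul, Complex.ofReal_neg, Complex.ofReal_add, neg_mul, add_mul,
    Pi.zero_apply, Complex.ofReal_zero, zero_mul, Finset.sum_const_zero, zero_add,
    Finset.sum_neg_distrib, Finset.sum_add_distrib] at KLa KLb
  -- assemble
  simp only [Finset.mul_sum]
  rw [show (∑ x, dp x
      (fun w => ((w.2 x : ℝ) : ℂ) * (Υ (ηinv w) a * (starRingEnd ℂ) (Υ (ηinv w) b))) z)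
      = ∑ x, (Υ w0 a * (((z.2 x : ℝ) : ℂ) * (starRingEnd ℂ) (Lb (T (0, Pi.single x 1))))
          + (starRingEnd ℂ) (Υ w0 b) * (((z.2 x : ℝ) : ℂ) * La (T (0, Pi.single x 1)))
          + Υ w0 a * (starRingEnd ℂ) (Υ w0 b))
    from Finset.sum_congr rfl fun i _ => by rw [vpz i]; ring]
  rw [show (∑ x, dp x
      (fun w => ((w.2 x : ℝ) : ℂ) * (Υ w a * (starRingEnd ℂ) (Υ w b))) w0)
      = ∑ x, (Υ w0 a * (((w0.2 x : ℝ) : ℂ) * (starRingEnd ℂ) (Lb (0, Pi.single x 1)))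
          + (starRingEnd ℂ) (Υ w0 b) * (((w0.2 x : ℝ) : ℂ) * La (0, Pi.single x 1))
          + Υ w0 a * (starRingEnd ℂ) (Υ w0 b))
    from Finset.sum_congr rfl fun i _ => by rw [vpw0 i]; ring]
  rw [show (∑ x, Complex.I * (ℏ:ℂ) *
        (dq x (fun w => Υ (ηinv w) a * Complex.exp ((-(I/(ℏ:ℂ))) * ((φ (ηinv w) : ℝ) : ℂ))) z *
            (starRingEnd ℂ) (dp x (fun w => Υ (ηinv w) b *
              Complex.exp ((-(I/(ℏ:ℂ))) * ((φ (ηinv w) : ℝ) : ℂ))) z)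
          - dp x (fun w => Υ (ηinv w) a * Complex.exp ((-(I/(ℏ:ℂ))) * ((φ (ηinv w) : ℝ) : ℂ))) z *
            (starRingEnd ℂ) (dq x (fun w => Υ (ηinv w) b *
              Complex.exp ((-(I/(ℏ:ℂ))) * ((φ (ηinv w) : ℝ) : ℂ))) z)))
      = ∑ x, (Complex.I * (ℏ:ℂ) *
            (La (T (Pi.single x 1, 0)) * (starRingEnd ℂ) (Lb (T (0, Pi.single x 1)))
              - La (T (0, Pi.single x 1)) * (starRingEnd ℂ) (Lb (T (Pi.single x 1, 0))))
          - (starRingEnd ℂ) (Υ w0 b) *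
              (((Lφ (T (0, Pi.single x 1)) : ℝ) : ℂ) * La (T (Pi.single x 1, 0)))
          + (starRingEnd ℂ) (Υ w0 b) *
              (((Lφ (T (Pi.single x 1, 0)) : ℝ) : ℂ) * La (T (0, Pi.single x 1)))
          + Υ w0 a * (((Lφ (T (Pi.single x 1, 0)) : ℝ) : ℂ) *
              (starRingEnd ℂ) (Lb (T (0, Pi.single x 1))))
          - Υ w0 a * (((Lφ (T (0, Pi.single x 1)) : ℝ) : ℂ) *
              (starRingEnd ℂ) (Lb (T (Pi.single x 1, 0)))))
    from Finset.sum_congr rfl fun i _ => by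
      rw [vdqa i, vdpb i, vdpa i, vdqb i, bkey ℏ hne _ _ _ _ _ _ _ _ _ (expunit ℏ (φ w0))]
      ring]
  rw [show (∑ x, Complex.I * (ℏ:ℂ) *
        (dq x (fun w => Υ w a) w0 * (starRingEnd ℂ) (dp x (fun w => Υ w b) w0)
          - dp x (fun w => Υ w a) w0 * (starRingEnd ℂ) (dq x (fun w => Υ w b) w0)))
      = ∑ x, Complex.I * (ℏ:ℂ) *
          (La (Pi.single x 1, 0) * (starRingEnd ℂ) (Lb (0, Pi.single x 1))
            - La (0, Pi.single x 1) * (starRingEnd ℂ) (Lb (Pi.single x 1, 0)))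
    from Finset.sum_congr rfl fun i _ => by
      rw [vdqaw0 i, vdpaw0 i, vdqbw0 i, vdpbw0 i]]
  simp only [mul_sub, Finset.sum_add_distrib, Finset.sum_sub_distrib, ← Finset.mul_sum]
  linear_combination (Complex.I * (ℏ:ℂ)) * KB + Υ w0 a * KLb
    + (starRingEnd ℂ) (Υ w0 b) * KLa
end
end

section
/- Mean-field factorization in the absence of quantum–classical coupling: let m, M, ħ > 0, let V_C : ℝⁿ → ℝ and V_Q : ℝᵐ → ℝ be smooth, and set V(q,x) := V_C(q) + V_Q(x), H_C(q,p) := |p|²/(2M) + V_C(q), H_I(q,p,x) := |p|²/(2M) + V(q,x), L_I(q,p,x) := |p|²/(2M) − V(q,x). Suppose Ψ_C : ℝ × ℝ²ⁿ → ℂ is smooth and solves the Koopman–van Hove equation iħ ∂ₜΨ_C = iħ {H_C, Ψ_C} − (Σᵢ pᵢ ∂H_C/∂pᵢ − H_C) Ψ_C, and ψ_Q : ℝ × ℝᵐ → ℂ is smooth and solves the Schrödinger equation iħ ∂ₜψ_Q = −(ħ²/(2m)) Δₓψ_Q + V_Q ψ_Q. Then the product Υ(t,z,x) := Ψ_C(t,z)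 ψ_Q(t,x) solves the quantum–classical wave equation iħ ∂ₜΥ = −(L_I Υ + (ħ²/(2m)) ΔₓΥ) + iħ {H_I, Υ}. -/
open Complex

noncomputable section

variable {n : ℕ}

variable {d : ℕ}

/-- `∂f/∂qⁱ` on the hybrid space (complex-valued). -/
noncomputable def dqHc (i : Fin n) (f : Hyb n d → ℂ) (w : Hyb n d) : ℂ :=
  fderiv ℝ f w ((Pi.single i 1, 0), 0)

/-- `∂f/∂pᵢ` on the hybrid space (complex-valued). -/
noncomputable def dpHc (i : Fin n) (f : Hyb n d → ℂ) (w : Hyb n d) : ℂ :=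
  fderiv ℝ f w ((0, Pi.single i 1), 0)

/-- `∂f/∂xᵏ` on the hybrid space (complex-valued). -/
noncomputable def dxHc (k : Fin d) (f : Hyb n d → ℂ) (w : Hyb n d) : ℂ :=
  fderiv ℝ f w (0, Pi.single k 1)

/-- Canonical Poisson bracket in the `z` variables only (complex-valued). -/
noncomputable def pbHc (F G : Hyb n d → ℂ) (w : Hyb n d) : ℂ :=
  ∑ i, (dqHc i F w * dpHc i G w - dpHc i F w * dqHc i G w)

/-- Laplacian `Δₓ` in the quantum variables `x` (complex-valued). -/
noncomputable def laplxHc (f : Hyb n d → ℂ) (w : Hyb n d) : ℂ :=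
  ∑ k, dxHc k (fun w' => dxHc k f w') w

/-- Spatial partial derivative `∂f/∂xᵏ` on the quantum configuration space. -/
noncomputable def dxc (k : Fin d) (f : (Fin d → ℝ) → ℂ) (x : Fin d → ℝ) : ℂ :=
  fderiv ℝ f x (Pi.single k 1)

/-- Laplacian on the quantum configuration space (complex-valued). -/
noncomputable def laplc (f : (Fin d → ℝ) → ℂ) (x : Fin d → ℝ) : ℂ :=
  ∑ k, dxc k (fun y => dxc k f y) x

section Aux
open ContinuousLinearMap

variable {n d : ℕ}

lemma hasFDerivAt_sumsq (n : ℕ) (p : Fin n → ℝ) :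
    HasFDerivAt (fun q : Fin n → ℝ => ∑ j, q j ^ 2)
      (∑ j, (2 * p j) • (ContinuousLinearMap.proj (R := ℝ) (φ := fun _ : Fin n => ℝ) j)) p := by
  apply HasFDerivAt.fun_sum
  intro j _
  have h := (hasDerivAt_pow 2 (p j)).comp_hasFDerivAt p
    ((ContinuousLinearMap.proj (R := ℝ) (φ := fun _ : Fin n => ℝ) j).hasFDerivAt)
  simp at h
  exact h

lemma ofReal_fderiv_apply {E : Type*} [NormedAddCommGroup E] [NormedSpace ℝ E]
    (r : E → ℝ) {x : E} (hr : DifferentiableAt ℝ r x) (v : E) :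
    fderiv ℝ (fun y => ((r y : ℝ) : ℂ)) x v = (fderiv ℝ r x v : ℂ) := by
  have h := (Complex.ofRealCLM.hasFDerivAt.comp x hr.hasFDerivAt).fderiv
  rw [show (fun y => ((r y : ℝ) : ℂ)) = Complex.ofRealCLM ∘ r from rfl, h]
  simp

lemma hyb_fderiv_mul (f : PS n → ℂ) (g : (Fin d → ℝ) → ℂ) (w : Hyb n d)
    (hf : DifferentiableAt ℝ f w.1) (hg : DifferentiableAt ℝ g w.2) (v : PS n × (Fin d → ℝ)) :
    fderiv ℝ (fun w' : Hyb n d => f w'.1 * g w'.2) w v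
      = fderiv ℝ f w.1 v.1 * g w.2 + f w.1 * fderiv ℝ g w.2 v.2 := by
  have h1 : DifferentiableAt ℝ (fun w' : Hyb n d => f w'.1) w := hf.comp w differentiableAt_fst
  have h2 : DifferentiableAt ℝ (fun w' : Hyb n d => g w'.2) w := hg.comp w differentiableAt_snd
  rw [fderiv_fun_mul h1 h2]
  have e1 : fderiv ℝ (fun w' : Hyb n d => f w'.1) w
      = (fderiv ℝ f w.1).comp (fst ℝ (PS n) (Fin d → ℝ)) := by
    rw [show (fun w' : Hyb n d => f w'.1) = f ∘ Prod.fst from rfl,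
      fderiv_comp w hf differentiableAt_fst, fderiv_fst]
  have e2 : fderiv ℝ (fun w' : Hyb n d => g w'.2) w
      = (fderiv ℝ g w.2).comp (snd ℝ (PS n) (Fin d → ℝ)) := by
    rw [show (fun w' : Hyb n d => g w'.2) = g ∘ Prod.snd from rfl,
      fderiv_comp w hg differentiableAt_snd, fderiv_snd]
  simp [e1, e2]
  ring

lemma hasFDerivAt_HC (M : ℝ) (VC : (Fin n → ℝ) → ℝ) (hVC : Differentiable ℝ VC) (z : PS n) :
    HasFDerivAt (fun w : PS n => (∑ j, w.2 j ^ 2) / (2 * M) + VC w.1)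
      (((2 * M)⁻¹ •
          ((∑ j, (2 * z.2 j) • (ContinuousLinearMap.proj (R := ℝ) (φ := fun _ : Fin n => ℝ) j)).comp
            (snd ℝ (Fin n → ℝ) (Fin n → ℝ))))
        + (fderiv ℝ VC z.1).comp (fst ℝ (Fin n → ℝ) (Fin n → ℝ))) z := by
  have h1 : HasFDerivAt (fun w : PS n => ∑ j, w.2 j ^ 2)
      ((∑ j, (2 * z.2 j) • (ContinuousLinearMap.proj (R := ℝ) (φ := fun _ : Fin n => ℝ) j)).comp
        (snd ℝ (Fin n → ℝ) (Fin n → ℝ))) z :=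
    (hasFDerivAt_sumsq n z.2).comp z hasFDerivAt_snd
  have h2 := (h1.const_smul ((2 * M)⁻¹)).add
    ((hVC z.1).hasFDerivAt.comp z (hasFDerivAt_fst (p := z)))
  have : (fun w : PS n => (∑ j, w.2 j ^ 2) / (2 * M) + VC w.1)
      = fun w : PS n => (2 * M)⁻¹ • (∑ j, w.2 j ^ 2) + VC (w.1) := by
    funext w; rw [smul_eq_mul, div_eq_inv_mul]
  rw [this]
  exact h2

lemma fderiv_HC_apply (M : ℝ) (hM : M ≠ 0) (VC : (Fin n → ℝ) → ℝ) (hVC : Differentiable ℝ VC)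
    (z : PS n) (v : PS n) :
    fderiv ℝ (fun w : PS n => (∑ j, w.2 j ^ 2) / (2 * M) + VC w.1) z v
      = (∑ j, z.2 j * v.2 j) / M + fderiv ℝ VC z.1 v.1 := by
  rw [(hasFDerivAt_HC M VC hVC z).fderiv]
  simp only [ContinuousLinearMap.add_apply, ContinuousLinearMap.smul_apply,
    ContinuousLinearMap.coe_comp', Function.comp_apply, ContinuousLinearMap.coe_snd',
    ContinuousLinearMap.coe_fst', ContinuousLinearMap.sum_apply, ContinuousLinearMap.proj_apply,
    smul_eq_mul]
  congr 1
  rw [Finset.mul_sum, Finset.sum_div]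
  refine Finset.sum_congr rfl fun j _ => ?_
  field_simp

lemma hasFDerivAt_HI (M : ℝ) (VC : (Fin n → ℝ) → ℝ) (hVC : Differentiable ℝ VC)
    (VQ : (Fin d → ℝ) → ℝ) (hVQ : Differentiable ℝ VQ) (w : Hyb n d) :
    HasFDerivAt (fun w' : Hyb n d => (∑ j, w'.1.2 j ^ 2) / (2 * M) + (VC w'.1.1 + VQ w'.2))
      (((2 * M)⁻¹ •
          ((∑ j, (2 * w.1.2 j) • (ContinuousLinearMap.proj (R := ℝ) (φ := fun _ : Fin n => ℝ) j)).comp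
            ((snd ℝ (Fin n → ℝ) (Fin n → ℝ)).comp (fst ℝ (PS n) (Fin d → ℝ)))))
        + ((fderiv ℝ VC w.1.1).comp ((fst ℝ (Fin n → ℝ) (Fin n → ℝ)).comp (fst ℝ (PS n) (Fin d → ℝ)))
            + (fderiv ℝ VQ w.2).comp (snd ℝ (PS n) (Fin d → ℝ)))) w := by
  have hp : HasFDerivAt (fun w' : Hyb n d => w'.1.2)
      ((snd ℝ (Fin n → ℝ) (Fin n → ℝ)).comp (fst ℝ (PS n) (Fin d → ℝ))) w :=
    hasFDerivAt_snd.comp w hasFDerivAt_fst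
  have hq : HasFDerivAt (fun w' : Hyb n d => w'.1.1)
      ((fst ℝ (Fin n → ℝ) (Fin n → ℝ)).comp (fst ℝ (PS n) (Fin d → ℝ))) w :=
    hasFDerivAt_fst.comp w hasFDerivAt_fst
  have h1 := ((hasFDerivAt_sumsq n w.1.2).comp w hp).const_smul ((2 * M)⁻¹)
  have h2 := ((hVC w.1.1).hasFDerivAt.comp w hq).add
    ((hVQ w.2).hasFDerivAt.comp w (hasFDerivAt_snd (p := w)))
  have h := h1.add h2
  have e : (fun w' : Hyb n d => (∑ j, w'.1.2 j ^ 2) / (2 * M) + (VC w'.1.1 + VQ w'.2))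
      = fun w' : Hyb n d => (2 * M)⁻¹ • (∑ j, w'.1.2 j ^ 2) + (VC w'.1.1 + VQ w'.2) := by
    funext w'; rw [smul_eq_mul, div_eq_inv_mul]
  rw [e]
  exact h

lemma fderiv_HI_apply (M : ℝ) (hM : M ≠ 0) (VC : (Fin n → ℝ) → ℝ) (hVC : Differentiable ℝ VC)
    (VQ : (Fin d → ℝ) → ℝ) (hVQ : Differentiable ℝ VQ) (w : Hyb n d) (v : PS n × (Fin d → ℝ)) :
    fderiv ℝ (fun w' : Hyb n d => (∑ j, w'.1.2 j ^ 2) / (2 * M) + (VC w'.1.1 + VQ w'.2)) w v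
      = (∑ j, w.1.2 j * v.1.2 j) / M + (fderiv ℝ VC w.1.1 v.1.1 + fderiv ℝ VQ w.2 v.2) := by
  rw [(hasFDerivAt_HI M VC hVC VQ hVQ w).fderiv]
  simp only [ContinuousLinearMap.add_apply, ContinuousLinearMap.smul_apply,
    ContinuousLinearMap.coe_comp', Function.comp_apply, ContinuousLinearMap.coe_snd',
    ContinuousLinearMap.coe_fst', ContinuousLinearMap.sum_apply, ContinuousLinearMap.proj_apply,
    smul_eq_mul]
  congr 1
  rw [Finset.mul_sum, Finset.sum_div]
  refine Finset.sum_congr rfl fun j _ => ?_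
  field_simp

lemma laplxHc_mul (f : PS n → ℂ) (g : (Fin d → ℝ) → ℂ)
    (hf : Differentiable ℝ f) (hg : ContDiff ℝ (⊤ : ℕ∞) g)
    (F : Hyb n d → ℂ) (hF : ∀ w', F w' = f w'.1 * g w'.2) (w : Hyb n d) :
    laplxHc F w = f w.1 * laplc g w.2 := by
  have hgd : Differentiable ℝ g := hg.differentiable (by simp)
  have hFe : F = fun w' => f w'.1 * g w'.2 := funext hF
  have hdx : ∀ (k : Fin d) (w' : Hyb n d),
      dxHc k F w' = f w'.1 * dxc k g w'.2 := by
    intro k w'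
    rw [hFe]
    unfold dxHc dxc
    rw [hyb_fderiv_mul f g w' (hf w'.1) (hgd w'.2)]
    simp
  have hgk : ∀ k : Fin d, Differentiable ℝ (fun y => dxc k g y) := by
    intro k
    have h0 : ContDiff ℝ (⊤ : ℕ∞) (fderiv ℝ g) := hg.fderiv_right (by exact_mod_cast le_top)
    have h1 : Differentiable ℝ (fderiv ℝ g) := h0.differentiable (by simp)
    exact (ContinuousLinearMap.apply ℝ ℂ (Pi.single k 1)).differentiable.comp h1
  unfold laplxHc laplc
  rw [Finset.mul_sum]
  refine Finset.sum_congr rfl fun k _ => ?_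
  have heq : (fun w' : Hyb n d => dxHc k F w') = fun w' => f w'.1 * (fun y => dxc k g y) w'.2 :=
    funext fun w' => hdx k w'
  calc dxHc k (fun w' => dxHc k F w') w
      = dxHc k (fun w' => f w'.1 * (fun y => dxc k g y) w'.2) w := by rw [heq]
    _ = f w.1 * dxc k (fun y => dxc k g y) w.2 := by
        unfold dxHc
        rw [hyb_fderiv_mul f (fun y => dxc k g y) w (hf w.1) ((hgk k) w.2)]
        simp only [map_zero, zero_mul, zero_add]
        rfl

end Aux

section Aux2
variable {n d : ℕ}

lemma dq_mul_eval (f : PS n → ℂ) (g : (Fin d → ℝ) → ℂ) (w : Hyb n d)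
    (hf : DifferentiableAt ℝ f w.1) (hg : DifferentiableAt ℝ g w.2)
    (F : Hyb n d → ℂ) (hF : ∀ w', F w' = f w'.1 * g w'.2) (i : Fin n) :
    dqHc i F w = dq i f w.1 * g w.2 := by
  rw [show F = fun w' => f w'.1 * g w'.2 from funext hF]
  unfold dqHc dq
  rw [hyb_fderiv_mul f g w hf hg ((Pi.single i 1, 0), 0)]
  simp

lemma dp_mul_eval (f : PS n → ℂ) (g : (Fin d → ℝ) → ℂ) (w : Hyb n d)
    (hf : DifferentiableAt ℝ f w.1) (hg : DifferentiableAt ℝ g w.2)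
    (F : Hyb n d → ℂ) (hF : ∀ w', F w' = f w'.1 * g w'.2) (i : Fin n) :
    dpHc i F w = dp i f w.1 * g w.2 := by
  rw [show F = fun w' => f w'.1 * g w'.2 from funext hF]
  unfold dpHc dp
  rw [hyb_fderiv_mul f g w hf hg ((0, Pi.single i 1), 0)]
  simp

lemma pbHc_mul (M : ℝ) (hM : M ≠ 0) (VC : (Fin n → ℝ) → ℝ) (hVC : Differentiable ℝ VC)
    (VQ : (Fin d → ℝ) → ℝ) (hVQ : Differentiable ℝ VQ)
    (f : PS n → ℂ) (g : (Fin d → ℝ) → ℂ) (hf : Differentiable ℝ f) (hg : Differentiable ℝ g)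
    (Hi : Hyb n d → ℂ)
    (hHi : ∀ w', Hi w' = (((∑ j, w'.1.2 j ^ 2) / (2 * M) + (VC w'.1.1 + VQ w'.2) : ℝ) : ℂ))
    (F : Hyb n d → ℂ) (hF : ∀ w', F w' = f w'.1 * g w'.2)
    (Hc : PS n → ℂ) (hHc : ∀ z, Hc z = (((∑ j, z.2 j ^ 2) / (2 * M) + VC z.1 : ℝ) : ℂ))
    (w : Hyb n d) :
    pbHc Hi F w = pb Hc f w.1 * g w.2 := by
  have hHid : DifferentiableAt ℝ
      (fun w' : Hyb n d => (∑ j, w'.1.2 j ^ 2) / (2 * M) + (VC w'.1.1 + VQ w'.2)) w :=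
    (hasFDerivAt_HI M VC hVC VQ hVQ w).differentiableAt
  have hHcd : DifferentiableAt ℝ
      (fun z : PS n => (∑ j, z.2 j ^ 2) / (2 * M) + VC z.1) w.1 :=
    (hasFDerivAt_HC M VC hVC w.1).differentiableAt
  have hq1 : ∀ i : Fin n, dqHc i Hi w = ((fderiv ℝ VC w.1.1 (Pi.single i 1) : ℝ) : ℂ) := by
    intro i
    rw [show Hi = fun w' => (((∑ j, w'.1.2 j ^ 2) / (2 * M) + (VC w'.1.1 + VQ w'.2) : ℝ) : ℂ)
      from funext hHi]
    unfold dqHc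
    rw [ofReal_fderiv_apply _ hHid ((Pi.single i 1, 0), 0),
      fderiv_HI_apply M hM VC hVC VQ hVQ w ((Pi.single i 1, 0), 0)]
    simp
  have hp1 : ∀ i : Fin n, dpHc i Hi w = ((w.1.2 i / M : ℝ) : ℂ) := by
    intro i
    rw [show Hi = fun w' => (((∑ j, w'.1.2 j ^ 2) / (2 * M) + (VC w'.1.1 + VQ w'.2) : ℝ) : ℂ)
      from funext hHi]
    unfold dpHc
    rw [ofReal_fderiv_apply _ hHid ((0, Pi.single i 1), 0),
      fderiv_HI_apply M hM VC hVC VQ hVQ w ((0, Pi.single i 1), 0)]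
    simp [Pi.single_apply, Finset.sum_ite_eq', mul_ite]
  have hq2 : ∀ i : Fin n, dq i Hc w.1 = ((fderiv ℝ VC w.1.1 (Pi.single i 1) : ℝ) : ℂ) := by
    intro i
    rw [show Hc = fun z => (((∑ j, z.2 j ^ 2) / (2 * M) + VC z.1 : ℝ) : ℂ) from funext hHc]
    unfold dq
    rw [ofReal_fderiv_apply _ hHcd (Pi.single i 1, 0),
      fderiv_HC_apply M hM VC hVC w.1 (Pi.single i 1, 0)]
    simp
  have hp2 : ∀ i : Fin n, dp i Hc w.1 = ((w.1.2 i / M : ℝ) : ℂ) := by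
    intro i
    rw [show Hc = fun z => (((∑ j, z.2 j ^ 2) / (2 * M) + VC z.1 : ℝ) : ℂ) from funext hHc]
    unfold dp
    rw [ofReal_fderiv_apply _ hHcd (0, Pi.single i 1),
      fderiv_HC_apply M hM VC hVC w.1 (0, Pi.single i 1)]
    simp [Pi.single_apply, Finset.sum_ite_eq', mul_ite]
  unfold pbHc pb
  rw [Finset.sum_mul]
  refine Finset.sum_congr rfl fun i _ => ?_
  rw [hq1 i, hp1 i, hq2 i, hp2 i,
    dq_mul_eval f g w (hf w.1) (hg w.2) F hF i,
    dp_mul_eval f g w (hf w.1) (hg w.2) F hF i]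
  ring

end Aux2

/-- Mean-field factorization in the absence of coupling: if
`Ψ_C` solves the Koopman–van Hove equation with `H_C = |p|²/(2M) + V_C(q)` and
`ψ_Q` solves the Schrödinger equation with potential `V_Q`, then
`Υ = Ψ_C ψ_Q` solves the quantum–classical wave equation for
`V(q,x) = V_C(q) + V_Q(x)`. -/
theorem meanfield_factorization (n d : ℕ) (m M ℏ : ℝ) (hm : 0 < m) (hM : 0 < M) (hℏ : 0 < ℏ)
    (VC : (Fin n → ℝ) → ℝ) (hVC : ContDiff ℝ (⊤ : ℕ∞) VC)
    (VQ : (Fin d → ℝ) → ℝ) (hVQ : ContDiff ℝ (⊤ : ℕ∞) VQ)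
    (ΨC : ℝ × PS n → ℂ) (hΨC : ContDiff ℝ (⊤ : ℕ∞) ΨC)
    (ψQ : ℝ × (Fin d → ℝ) → ℂ) (hψQ : ContDiff ℝ (⊤ : ℕ∞) ψQ)
    (hKvH : ∀ (t : ℝ) (z : PS n),
      Complex.I * ℏ * deriv (fun s => ΨC (s, z)) t
        = Complex.I * ℏ *
            pb (fun w => (((∑ i, w.2 i ^ 2) / (2 * M) + VC w.1 : ℝ) : ℂ))
              (fun w => ΨC (t, w)) z
          - (((∑ i, z.2 i * dpR i (fun w => (∑ j, w.2 j ^ 2) / (2 * M) + VC w.1) z)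
                - ((∑ i, z.2 i ^ 2) / (2 * M) + VC z.1) : ℝ) : ℂ) * ΨC (t, z))
    (hSch : ∀ (t : ℝ) (x : Fin d → ℝ),
      Complex.I * ℏ * deriv (fun s => ψQ (s, x)) t
        = -(ℏ ^ 2 / (2 * m)) * laplc (fun y => ψQ (t, y)) x + (VQ x : ℂ) * ψQ (t, x)) :
    ∀ (t : ℝ) (w : Hyb n d),
      Complex.I * ℏ * deriv (fun s => ΨC (s, w.1) * ψQ (s, w.2)) t
        = -((LI M (fun qx => VC qx.1 + VQ qx.2) w : ℂ) * (ΨC (t, w.1) * ψQ (t, w.2))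
              + (ℏ ^ 2 / (2 * m)) *
                  laplxHc (fun w' => ΨC (t, w'.1) * ψQ (t, w'.2)) w)
          + Complex.I * ℏ *
              pbHc (fun w' => ((HI M (fun qx => VC qx.1 + VQ qx.2) w' : ℝ) : ℂ))
                (fun w' => ΨC (t, w'.1) * ψQ (t, w'.2)) w := by
  intro t w
  have hMne : M ≠ 0 := ne_of_gt hM
  have hΨd : Differentiable ℝ ΨC := hΨC.differentiable (by simp)
  have hψd : Differentiable ℝ ψQ := hψQ.differentiable (by simp)
  have hVCd : Differentiable ℝ VC := hVC.differentiable (by simp)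
  have hVQd : Differentiable ℝ VQ := hVQ.differentiable (by simp)
  have hfd : Differentiable ℝ (fun z' => ΨC (t, z')) :=
    hΨd.comp ((differentiable_const t).prodMk differentiable_id)
  have hgc : ContDiff ℝ (⊤ : ℕ∞) (fun y => ψQ (t, y)) :=
    hψQ.comp ((contDiff_const (c := t)).prodMk contDiff_id)
  have hgd : Differentiable ℝ (fun y => ψQ (t, y)) :=
    hψd.comp ((differentiable_const t).prodMk differentiable_id)
  have ht1 : DifferentiableAt ℝ (fun s => ΨC (s, w.1)) t :=
    (hΨd.comp (differentiable_id.prodMk (differentiable_const w.1))).differentiableAt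
  have ht2 : DifferentiableAt ℝ (fun s => ψQ (s, w.2)) t :=
    (hψd.comp (differentiable_id.prodMk (differentiable_const w.2))).differentiableAt
  have hlap := laplxHc_mul (fun z' => ΨC (t, z')) (fun y => ψQ (t, y)) hfd hgc
    (fun w' => ΨC (t, w'.1) * ψQ (t, w'.2)) (fun _ => rfl) w
  have hpb := pbHc_mul M hMne VC hVCd VQ hVQd (fun z' => ΨC (t, z')) (fun y => ψQ (t, y)) hfd hgd
    (fun w' => ((HI M (fun qx => VC qx.1 + VQ qx.2) w' : ℝ) : ℂ)) (fun _ => rfl)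
    (fun w' => ΨC (t, w'.1) * ψQ (t, w'.2)) (fun _ => rfl)
    (fun z => (((∑ i, z.2 i ^ 2) / (2 * M) + VC z.1 : ℝ) : ℂ)) (fun _ => rfl) w
  have hdpR : ∀ i : Fin n,
      dpR i (fun w' : PS n => (∑ j, w'.2 j ^ 2) / (2 * M) + VC w'.1) w.1 = w.1.2 i / M := by
    intro i
    unfold dpR
    rw [fderiv_HC_apply M hMne VC hVCd w.1 (0, Pi.single i 1)]
    simp [Pi.single_apply, Finset.sum_ite_eq', mul_ite]
  have hc : (∑ i, w.1.2 i * dpR i (fun w' : PS n => (∑ j, w'.2 j ^ 2) / (2 * M) + VC w'.1) w.1)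
      = (∑ i, w.1.2 i ^ 2) / M := by
    rw [Finset.sum_div]
    refine Finset.sum_congr rfl fun i _ => ?_
    rw [hdpR i]
    ring
  have hK := hKvH t w.1
  rw [hc] at hK
  have hS := hSch t w.2
  rw [deriv_fun_mul ht1 ht2, hlap, hpb]
  have expand : Complex.I * ℏ *
      (deriv (fun s => ΨC (s, w.1)) t * ψQ (t, w.2)
        + ΨC (t, w.1) * deriv (fun s => ψQ (s, w.2)) t)
      = (Complex.I * ℏ * deriv (fun s => ΨC (s, w.1)) t) * ψQ (t, w.2)
        + ΨC (t, w.1) * (Complex.I * ℏ * deriv (fun s => ψQ (s, w.2)) t) := by ring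
  rw [expand, hK, hS]
  simp only [LI]
  push_cast
  have hM2 : (M : ℂ) ≠ 0 := Complex.ofReal_ne_zero.mpr hMne
  field_simp
  ring
end
end

section
/- Hybrid density evolution without quantum kinetic energy: let H_I : ℝ²ⁿ × ℝᵐ → ℝ be smooth and set L_I := Σᵢ pᵢ ∂H_I/∂pᵢ − H_I. Suppose 𝒮, D : ℝ × (ℝ²ⁿ × ℝᵐ) → ℝ are smooth and satisfy ∂ₜ𝒮 = L_I + {H_I, 𝒮} and ∂ₜD = {H_I, D}, where the Poisson bracket is taken in the phase-space variables z = (q,p) only. Then the hybrid density 𝒟 := D + Σᵢ ∂_{pᵢ}(pᵢ D) + {D, 𝒮} satisfies the x-parameterized classical Liouville equation ∂ₜ𝒟 = {H_I, 𝒟}. -/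
open Complex

noncomputable section

variable {n : ℕ}

variable {d : ℕ}

section PDAux

variable {EE : Type*} [NormedAddCommGroup EE] [NormedSpace ℝ EE]

/-- Directional derivative. -/
noncomputable def pd (v : EE) (f : EE → ℝ) : EE → ℝ := fun x => fderiv ℝ f x v

abbrev SmoothR (f : EE → ℝ) : Prop := ContDiff ℝ (⊤ : ℕ∞) f

theorem smooth_diffAt {f : EE → ℝ} (hf : SmoothR f) (x : EE) : DifferentiableAt ℝ f x :=
  (hf.differentiable (by norm_cast)).differentiableAt

theorem fderiv_smooth' {f : EE → ℝ} (hf : SmoothR f) : ContDiff ℝ (⊤ : ℕ∞) (fderiv ℝ f) :=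
  hf.fderiv_right (by exact_mod_cast le_top)

theorem SmoothR.pd {f : EE → ℝ} (hf : SmoothR f) (v : EE) : SmoothR (pd v f) :=
  (ContinuousLinearMap.apply ℝ ℝ v).contDiff.comp (fderiv_smooth' hf)

theorem pd_eq_snd {f : EE → ℝ} (hf : SmoothR f) (u v x : EE) :
    pd u (pd v f) x = fderiv ℝ (fderiv ℝ f) x u v := by
  have hdf : DifferentiableAt ℝ (fderiv ℝ f) x :=
    ((fderiv_smooth' hf).differentiable (by norm_cast)).differentiableAt
  have h : _root_.pd v f = fun y => (ContinuousLinearMap.apply ℝ ℝ v) (fderiv ℝ f y) := rfl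
  rw [_root_.pd, h]
  rw [fderiv_comp' x (ContinuousLinearMap.apply ℝ ℝ v).differentiableAt hdf]
  simp [ContinuousLinearMap.fderiv]

theorem pd_comm {f : EE → ℝ} (hf : SmoothR f) (u v : EE) (x : EE) :
    pd u (pd v f) x = pd v (pd u f) x := by
  rw [pd_eq_snd hf, pd_eq_snd hf]
  exact (hf.contDiffAt.isSymmSndFDerivAt (by rw [minSmoothness_of_isRCLikeNormedField]; exact WithTop.coe_le_coe.mpr le_top)) u v

theorem pd_add {f g : EE → ℝ} {x : EE} (hf : DifferentiableAt ℝ f x)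
    (hg : DifferentiableAt ℝ g x) (v : EE) :
    pd v (fun y => f y + g y) x = pd v f x + pd v g x := by
  simp [pd, fderiv_fun_add hf hg]

theorem pd_sub {f g : EE → ℝ} {x : EE} (hf : DifferentiableAt ℝ f x)
    (hg : DifferentiableAt ℝ g x) (v : EE) :
    pd v (fun y => f y - g y) x = pd v f x - pd v g x := by
  simp [pd, fderiv_fun_sub hf hg]

theorem pd_mul {f g : EE → ℝ} {x : EE} (hf : DifferentiableAt ℝ f x)
    (hg : DifferentiableAt ℝ g x) (v : EE) :
    pd v (fun y => f y * g y) x = pd v f x * g x + f x * pd v g x := by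
  simp [pd, fderiv_fun_mul hf hg]; ring

theorem pd_sum {ι : Type*} (s : Finset ι) {f : ι → EE → ℝ} {x : EE}
    (hf : ∀ i ∈ s, DifferentiableAt ℝ (f i) x) (v : EE) :
    pd v (fun y => ∑ i ∈ s, f i y) x = ∑ i ∈ s, pd v (f i) x := by
  simp only [pd]; rw [fderiv_fun_sum hf]; simp

theorem pd_clm (L : EE →L[ℝ] ℝ) (v x : EE) : pd v (fun y => L y) x = L v := by
  simp [pd, L.fderiv]

end PDAux

section HybAux

variable {n d : ℕ}

abbrev EH (n d : ℕ) := ℝ × Hyb n d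

def avec (n d : ℕ) (i : Fin n) : EH n d := (0, ((Pi.single i 1, 0), 0))
def bvec (n d : ℕ) (i : Fin n) : EH n d := (0, ((0, Pi.single i 1), 0))
def tvec (n d : ℕ) : EH n d := (1, 0)

/-- momentum coordinate as a continuous linear map -/
noncomputable def Pclm (n d : ℕ) (i : Fin n) : EH n d →L[ℝ] ℝ :=
  (ContinuousLinearMap.proj i).comp
    (((ContinuousLinearMap.snd ℝ (Fin n → ℝ) (Fin n → ℝ)).comp
      (ContinuousLinearMap.fst ℝ (PS n) (Fin d → ℝ))).comp
      (ContinuousLinearMap.snd ℝ ℝ (Hyb n d)))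

def Pc (n d : ℕ) (i : Fin n) : EH n d → ℝ := fun x => x.2.1.2 i

theorem Pc_eq (i : Fin n) : Pc n d i = ⇑(Pclm n d i) := rfl

theorem smooth_Pc (i : Fin n) : SmoothR (Pc n d i) := by
  rw [Pc_eq]; exact (Pclm n d i).contDiff

theorem pd_Pc (i : Fin n) (v x : EH n d) : pd v (Pc n d i) x = v.2.1.2 i := by
  rw [Pc_eq]; exact pd_clm _ v x

theorem pd_avec_Pc (i j : Fin n) (x : EH n d) : pd (avec n d j) (Pc n d i) x = 0 := by
  rw [pd_Pc]; simp [avec]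

theorem pd_tvec_Pc (i : Fin n) (x : EH n d) : pd (tvec n d) (Pc n d i) x = 0 := by
  rw [pd_Pc]; simp [tvec]

theorem pd_bvec_Pc (i j : Fin n) (x : EH n d) :
    pd (bvec n d j) (Pc n d i) x = (Pi.single j (1:ℝ) : Fin n → ℝ) i := by
  rw [pd_Pc]; simp [bvec]

theorem single_mul_sum (i : Fin n) (f : Fin n → ℝ) :
    ∑ j, (Pi.single i (1:ℝ) : Fin n → ℝ) j * f j = f i := by
  rw [Fintype.sum_eq_single i]
  · simp
  · intro j hj; simp [Pi.single_eq_of_ne' hj.symm]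

noncomputable def pb2 (F G : EH n d → ℝ) : EH n d → ℝ := fun x =>
  ∑ i, (pd (avec n d i) F x * pd (bvec n d i) G x - pd (bvec n d i) F x * pd (avec n d i) G x)

theorem SmoothR.pb2 {F G : EH n d → ℝ} (hF : SmoothR F) (hG : SmoothR G) :
    SmoothR (pb2 F G) := by
  apply ContDiff.sum
  intro i _
  exact ((hF.pd _).mul (hG.pd _)).sub ((hF.pd _).mul (hG.pd _))

theorem pd_pb2 {F G : EH n d → ℝ} (hF : SmoothR F) (hG : SmoothR G) (v x : EH n d) :
    pd v (pb2 F G) x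
      = ∑ i, (pd v (pd (avec n d i) F) x * pd (bvec n d i) G x
          + pd (avec n d i) F x * pd v (pd (bvec n d i) G) x
          - (pd v (pd (bvec n d i) F) x * pd (avec n d i) G x
          + pd (bvec n d i) F x * pd v (pd (avec n d i) G) x)) := by
  rw [show pb2 F G = fun x => ∑ i, (pd (avec n d i) F x * pd (bvec n d i) G x
      - pd (bvec n d i) F x * pd (avec n d i) G x) from rfl]
  rw [pd_sum Finset.univ (fun i _ =>
    smooth_diffAt (((hF.pd _).mul (hG.pd _)).sub ((hF.pd _).mul (hG.pd _))) x) v]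
  refine Finset.sum_congr rfl fun i _ => ?_
  rw [pd_sub (smooth_diffAt ((hF.pd _).mul (hG.pd _)) x) (smooth_diffAt ((hF.pd _).mul (hG.pd _)) x),
    pd_mul (smooth_diffAt (hF.pd _) x) (smooth_diffAt (hG.pd _) x),
    pd_mul (smooth_diffAt (hF.pd _) x) (smooth_diffAt (hG.pd _) x)]

theorem sum_antisym {T : Fin n → Fin n → ℝ} (h : ∀ i j, T i j + T j i = 0) :
    ∑ i, ∑ j, T i j = 0 := by
  have h1 : ∑ i, ∑ j, T i j = ∑ i, ∑ j, T j i := Finset.sum_comm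
  have h2 : (∑ i, ∑ j, T i j) + (∑ i, ∑ j, T j i) = 0 := by
    rw [← Finset.sum_add_distrib]
    rw [Finset.sum_congr rfl fun i _ => (Finset.sum_add_distrib).symm]
    rw [Finset.sum_congr rfl fun i _ => Finset.sum_congr rfl fun j _ => h i j]
    simp
  rw [h1] at h2 ⊢
  linarith

theorem pb2_antisymm (F G : EH n d → ℝ) (x : EH n d) : pb2 F G x = -pb2 G F x := by
  rw [pb2, pb2, ← Finset.sum_neg_distrib]
  exact Finset.sum_congr rfl fun i _ => by ring

theorem pb2_pb2_expand {F G K : EH n d → ℝ} (hG : SmoothR G) (hK : SmoothR K) (x : EH n d) :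
    pb2 F (pb2 G K) x = ∑ i, ∑ j,
      (pd (avec n d i) F x *
        (pd (bvec n d i) (pd (avec n d j) G) x * pd (bvec n d j) K x
          + pd (avec n d j) G x * pd (bvec n d i) (pd (bvec n d j) K) x
          - (pd (bvec n d i) (pd (bvec n d j) G) x * pd (avec n d j) K x
            + pd (bvec n d j) G x * pd (bvec n d i) (pd (avec n d j) K) x))
      - pd (bvec n d i) F x *
        (pd (avec n d i) (pd (avec n d j) G) x * pd (bvec n d j) K x
          + pd (avec n d j) G x * pd (avec n d i) (pd (bvec n d j) K) x
          - (pd (avec n d i) (pd (bvec n d j) G) x * pd (avec n d j) K x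
            + pd (bvec n d j) G x * pd (avec n d i) (pd (avec n d j) K) x))) := by
  rw [pb2]
  refine Finset.sum_congr rfl fun i _ => ?_
  rw [pd_pb2 hG hK, pd_pb2 hG hK, Finset.mul_sum, Finset.mul_sum, ← Finset.sum_sub_distrib]

theorem jacobi_cyclic {F G K : EH n d → ℝ} (hF : SmoothR F) (hG : SmoothR G)
    (hK : SmoothR K) (x : EH n d) :
    pb2 F (pb2 G K) x + pb2 G (pb2 K F) x + pb2 K (pb2 F G) x = 0 := by
  rw [pb2_pb2_expand hG hK x, pb2_pb2_expand hK hF x, pb2_pb2_expand hF hG x,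
    ← Finset.sum_add_distrib, ← Finset.sum_add_distrib]
  rw [Finset.sum_congr rfl fun i _ => by
    rw [← Finset.sum_add_distrib, ← Finset.sum_add_distrib]]
  refine sum_antisym fun i j => ?_
  simp only [pd_comm hF (avec n d j) (avec n d i) x, pd_comm hF (avec n d j) (bvec n d i) x,
    pd_comm hF (bvec n d j) (avec n d i) x, pd_comm hF (bvec n d j) (bvec n d i) x,
    pd_comm hG (avec n d j) (avec n d i) x, pd_comm hG (avec n d j) (bvec n d i) x,
    pd_comm hG (bvec n d j) (avec n d i) x, pd_comm hG (bvec n d j) (bvec n d i) x,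
    pd_comm hK (avec n d j) (avec n d i) x, pd_comm hK (avec n d j) (bvec n d i) x,
    pd_comm hK (bvec n d j) (avec n d i) x, pd_comm hK (bvec n d j) (bvec n d i) x]
  ring

/-- The operator `f ↦ Σᵢ ∂_{pᵢ}(pᵢ f)`. -/
noncomputable def ADop (f : EH n d → ℝ) : EH n d → ℝ := fun x =>
  ∑ i, pd (bvec n d i) (fun y => Pc n d i y * f y) x

/-- `L = Σᵢ pᵢ ∂H/∂pᵢ − H`. -/
noncomputable def Lop (H : EH n d → ℝ) : EH n d → ℝ := fun y =>
  (∑ i, Pc n d i y * pd (bvec n d i) H y) - H y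

theorem ADop_eq {f : EH n d → ℝ} (hf : SmoothR f) :
    ADop f = fun x => ∑ i, (f x + Pc n d i x * pd (bvec n d i) f x) := by
  funext x
  refine Finset.sum_congr rfl fun i _ => ?_
  rw [pd_mul (smooth_diffAt (smooth_Pc i) x) (smooth_diffAt hf x), pd_bvec_Pc]
  simp

theorem SmoothR.ADop {f : EH n d → ℝ} (hf : SmoothR f) : SmoothR (ADop f) := by
  rw [ADop_eq hf]
  exact ContDiff.sum fun i _ => hf.add ((smooth_Pc i).mul (hf.pd _))

theorem SmoothR.Lop {H : EH n d → ℝ} (hH : SmoothR H) : SmoothR (Lop H) :=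
  (ContDiff.sum fun i _ => (smooth_Pc i).mul (hH.pd _)).sub hH

theorem pd_Lop {H : EH n d → ℝ} (hH : SmoothR H) (v x : EH n d) :
    pd v (Lop H) x
      = (∑ j, (pd v (Pc n d j) x * pd (bvec n d j) H x
          + Pc n d j x * pd v (pd (bvec n d j) H) x)) - pd v H x := by
  rw [show Lop H = fun y => (∑ j, Pc n d j y * pd (bvec n d j) H y) - H y from rfl]
  rw [pd_sub (smooth_diffAt (ContDiff.sum fun j _ => (smooth_Pc j).mul (hH.pd _)) x)
    (smooth_diffAt hH x)]
  rw [pd_sum Finset.univ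
    (fun j _ => smooth_diffAt ((smooth_Pc j).mul (hH.pd _)) x)]
  refine congrArg (· - pd v H x) (Finset.sum_congr rfl fun j _ => ?_)
  rw [pd_mul (smooth_diffAt (smooth_Pc j) x) (smooth_diffAt (hH.pd _) x)]

theorem pd_ADop {f : EH n d → ℝ} (hf : SmoothR f) (v x : EH n d) :
    pd v (ADop f) x
      = ∑ j, (pd v f x + (pd v (Pc n d j) x * pd (bvec n d j) f x
          + Pc n d j x * pd v (pd (bvec n d j) f) x)) := by
  rw [ADop_eq hf]
  rw [pd_sum Finset.univ (f := fun j y => f y + Pc n d j y * pd (bvec n d j) f y)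
    (fun j _ => (smooth_diffAt hf x).add
      (smooth_diffAt ((smooth_Pc j).mul (hf.pd _)) x))]
  refine Finset.sum_congr rfl fun j _ => ?_
  rw [pd_add (smooth_diffAt hf x) (smooth_diffAt ((smooth_Pc j).mul (hf.pd _)) x),
    pd_mul (smooth_diffAt (smooth_Pc j) x) (smooth_diffAt (hf.pd _) x)]

theorem momentum_id {H D : EH n d → ℝ} (hH : SmoothR H) (hD : SmoothR D) (x : EH n d) :
    ADop (pb2 H D) x + pb2 D (Lop H) x = pb2 H (ADop D) x := by
  have hBL : ∀ i : Fin n, pd (bvec n d i) (Lop H) x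
      = ∑ j, Pc n d j x * pd (bvec n d i) (pd (bvec n d j) H) x := by
    intro i
    rw [pd_Lop hH]
    simp only [pd_bvec_Pc]
    rw [Finset.sum_add_distrib, single_mul_sum i (fun j => pd (bvec n d j) H x)]
    ring
  have hAL : ∀ i : Fin n, pd (avec n d i) (Lop H) x
      = (∑ j, Pc n d j x * pd (avec n d i) (pd (bvec n d j) H) x) - pd (avec n d i) H x := by
    intro i
    rw [pd_Lop hH]
    simp only [pd_avec_Pc, zero_mul, zero_add]
  have hAAD : ∀ i : Fin n, pd (avec n d i) (ADop D) x
      = ∑ j, (pd (avec n d i) D x + Pc n d j x * pd (avec n d i) (pd (bvec n d j) D) x) := by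
    intro i
    rw [pd_ADop hD]
    simp only [pd_avec_Pc, zero_mul, zero_add]
  have hBAD : ∀ i : Fin n, pd (bvec n d i) (ADop D) x
      = pd (bvec n d i) D x
        + ∑ j, (pd (bvec n d i) D x + Pc n d j x * pd (bvec n d i) (pd (bvec n d j) D) x) := by
    intro i
    rw [pd_ADop hD]
    simp only [pd_bvec_Pc]
    rw [Finset.sum_congr rfl fun j _ => show
      pd (bvec n d i) D x + ((Pi.single i (1:ℝ) : Fin n → ℝ) j * pd (bvec n d j) D x
        + Pc n d j x * pd (bvec n d i) (pd (bvec n d j) D) x)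
      = (Pi.single i (1:ℝ) : Fin n → ℝ) j * pd (bvec n d j) D x
        + (pd (bvec n d i) D x + Pc n d j x * pd (bvec n d i) (pd (bvec n d j) D) x) from by ring]
    rw [Finset.sum_add_distrib, single_mul_sum i (fun j => pd (bvec n d j) D x)]
  -- expand everything into a double sum
  rw [← sub_eq_zero, ADop_eq (hH.pb2 hD)]
  rw [show pb2 D (Lop H) x = ∑ i, (pd (avec n d i) D x * pd (bvec n d i) (Lop H) x
      - pd (bvec n d i) D x * pd (avec n d i) (Lop H) x) from rfl]
  rw [show pb2 H (ADop D) x = ∑ i, (pd (avec n d i) H x * pd (bvec n d i) (ADop D) x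
      - pd (bvec n d i) H x * pd (avec n d i) (ADop D) x) from rfl]
  rw [← Finset.sum_add_distrib, ← Finset.sum_sub_distrib]
  rw [Finset.sum_congr rfl fun i _ => show
      pb2 H D x + Pc n d i x * pd (bvec n d i) (pb2 H D) x
        + (pd (avec n d i) D x * pd (bvec n d i) (Lop H) x
          - pd (bvec n d i) D x * pd (avec n d i) (Lop H) x)
        - (pd (avec n d i) H x * pd (bvec n d i) (ADop D) x
          - pd (bvec n d i) H x * pd (avec n d i) (ADop D) x)
      = ∑ j,
        (((pd (avec n d j) H x * pd (bvec n d j) D x - pd (bvec n d j) H x * pd (avec n d j) D x)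
          + Pc n d i x * (pd (bvec n d i) (pd (avec n d j) H) x * pd (bvec n d j) D x
            + pd (avec n d j) H x * pd (bvec n d i) (pd (bvec n d j) D) x
            - (pd (bvec n d i) (pd (bvec n d j) H) x * pd (avec n d j) D x
              + pd (bvec n d j) H x * pd (bvec n d i) (pd (avec n d j) D) x)))
        + (pd (avec n d i) D x * (Pc n d j x * pd (bvec n d i) (pd (bvec n d j) H) x)
          - pd (bvec n d i) D x * (Pc n d j x * pd (avec n d i) (pd (bvec n d j) H) x))
        - (pd (avec n d i) H x * (pd (bvec n d i) D x
              + Pc n d j x * pd (bvec n d i) (pd (bvec n d j) D) x)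
          - pd (bvec n d i) H x * (pd (avec n d i) D x
              + Pc n d j x * pd (avec n d i) (pd (bvec n d j) D) x))) from by
    rw [pd_pb2 hH hD (bvec n d i) x, hBL i, hAL i, hAAD i, hBAD i, pb2]
    simp only [Finset.sum_add_distrib, Finset.sum_sub_distrib, ← Finset.mul_sum,
      Finset.sum_const, Finset.card_univ, Fintype.card_fin, nsmul_eq_mul, mul_add, mul_sub]
    ring]
  refine sum_antisym fun i j => ?_
  simp only [pd_comm hH (avec n d j) (avec n d i) x, pd_comm hH (avec n d j) (bvec n d i) x,
    pd_comm hH (bvec n d j) (avec n d i) x, pd_comm hH (bvec n d j) (bvec n d i) x,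
    pd_comm hD (avec n d j) (avec n d i) x, pd_comm hD (avec n d j) (bvec n d i) x,
    pd_comm hD (bvec n d j) (avec n d i) x, pd_comm hD (bvec n d j) (bvec n d i) x]
  ring

theorem pd_neg {EE : Type*} [NormedAddCommGroup EE] [NormedSpace ℝ EE]
    {g : EE → ℝ} (v x : EE) : pd v (fun y => -g y) x = -pd v g x := by
  simp [pd, fderiv_neg]

theorem pb2_neg_right (F : EH n d → ℝ) {G : EH n d → ℝ} (x : EH n d) :
    pb2 F (fun y => -G y) x = -pb2 F G x := by
  rw [pb2, pb2, ← Finset.sum_neg_distrib]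
  refine Finset.sum_congr rfl fun i _ => ?_
  rw [pd_neg, pd_neg]; ring

theorem pb2_add_right {F g h : EH n d → ℝ} (hg : SmoothR g) (hh : SmoothR h) (x : EH n d) :
    pb2 F (fun y => g y + h y) x = pb2 F g x + pb2 F h x := by
  rw [pb2, pb2, pb2, ← Finset.sum_add_distrib]
  refine Finset.sum_congr rfl fun i _ => ?_
  rw [pd_add (smooth_diffAt hg x) (smooth_diffAt hh x),
    pd_add (smooth_diffAt hg x) (smooth_diffAt hh x)]
  ring

theorem jacobi' {H D S : EH n d → ℝ} (hH : SmoothR H) (hD : SmoothR D) (hS : SmoothR S)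
    (x : EH n d) :
    pb2 (pb2 H D) S x + pb2 D (pb2 H S) x = pb2 H (pb2 D S) x := by
  have hc := jacobi_cyclic hH hD hS x
  have h1 : pb2 D (pb2 S H) x = -pb2 D (pb2 H S) x := by
    rw [show pb2 S H = fun y => -pb2 H S y from funext fun y => pb2_antisymm S H y]
    exact pb2_neg_right D x
  have h2 : pb2 S (pb2 H D) x = -pb2 (pb2 H D) S x := pb2_antisymm _ _ x
  rw [h1, h2] at hc
  linarith

theorem key_liouville {H D S : EH n d → ℝ} (hH : SmoothR H) (hD : SmoothR D) (hS : SmoothR S)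
    (hDt : ∀ y, pd (tvec n d) D y = pb2 H D y)
    (hSt : ∀ y, pd (tvec n d) S y = Lop H y + pb2 H S y)
    (x : EH n d) :
    pd (tvec n d) (fun y => D y + ADop D y + pb2 D S y) x
      = pb2 H (fun y => D y + ADop D y + pb2 D S y) x := by
  have hDfun : pd (tvec n d) D = pb2 H D := funext hDt
  have hSfun : pd (tvec n d) S = fun y => Lop H y + pb2 H S y := funext hSt
  have hAD : SmoothR (ADop D) := hD.ADop
  have hpbDS : SmoothR (pb2 D S) := hD.pb2 hS
  have hpbHD : SmoothR (pb2 H D) := hH.pb2 hD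
  have hpbHS : SmoothR (pb2 H S) := hH.pb2 hS
  have hLop : SmoothR (Lop H) := hH.Lop
  -- split the time derivative
  rw [pd_add (smooth_diffAt (hD.add hAD) x) (smooth_diffAt hpbDS x),
    pd_add (smooth_diffAt hD x) (smooth_diffAt hAD x)]
  -- T2 : time derivative of ADop D
  have hT2 : pd (tvec n d) (ADop D) x = ADop (pb2 H D) x := by
    rw [pd_ADop hD, ADop_eq hpbHD]
    refine Finset.sum_congr rfl fun j _ => ?_
    rw [pd_tvec_Pc, pd_comm hD (tvec n d) (bvec n d j) x, hDfun]
    ring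
  -- T3 : time derivative of pb2 D S
  have hT3 : pd (tvec n d) (pb2 D S) x
      = pb2 (pb2 H D) S x + (pb2 D (Lop H) x + pb2 D (pb2 H S) x) := by
    rw [pd_pb2 hD hS (tvec n d) x]
    rw [show pb2 (pb2 H D) S x = ∑ i, (pd (avec n d i) (pb2 H D) x * pd (bvec n d i) S x
      - pd (bvec n d i) (pb2 H D) x * pd (avec n d i) S x) from rfl]
    rw [show pb2 D (Lop H) x = ∑ i, (pd (avec n d i) D x * pd (bvec n d i) (Lop H) x
      - pd (bvec n d i) D x * pd (avec n d i) (Lop H) x) from rfl]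
    rw [show pb2 D (pb2 H S) x = ∑ i, (pd (avec n d i) D x * pd (bvec n d i) (pb2 H S) x
      - pd (bvec n d i) D x * pd (avec n d i) (pb2 H S) x) from rfl]
    rw [← Finset.sum_add_distrib, ← Finset.sum_add_distrib]
    refine Finset.sum_congr rfl fun i _ => ?_
    rw [pd_comm hD (tvec n d) (avec n d i) x, pd_comm hD (tvec n d) (bvec n d i) x,
      pd_comm hS (tvec n d) (avec n d i) x, pd_comm hS (tvec n d) (bvec n d i) x,
      hDfun, hSfun,
      pd_add (smooth_diffAt hLop x) (smooth_diffAt hpbHS x),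
      pd_add (smooth_diffAt hLop x) (smooth_diffAt hpbHS x)]
    ring
  rw [hDt x, hT2, hT3]
  -- right-hand side
  rw [show (fun y => D y + ADop D y + pb2 D S y)
      = fun y => (fun z => D z + ADop D z) y + pb2 D S y from rfl,
    pb2_add_right (hD.add hAD) hpbDS x,
    pb2_add_right hD hAD x]
  rw [← momentum_id hH hD x, ← jacobi' hH hD hS x]
  ring

section Bridge

variable {n d : ℕ}

theorem slice_fderiv {f : EH n d → ℝ} (hf : SmoothR f) (t : ℝ) (w v : Hyb n d) :
    fderiv ℝ (fun w' => f (t, w')) w v = fderiv ℝ f (t, w) (0, v) := by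
  have h : HasFDerivAt (fun w' : Hyb n d => (t, w'))
      ((0 : Hyb n d →L[ℝ] ℝ).prod (ContinuousLinearMap.id ℝ (Hyb n d))) w :=
    HasFDerivAt.prodMk (hasFDerivAt_const t w) (hasFDerivAt_id w)
  have h2 : HasFDerivAt (fun w' => f (t, w'))
      ((fderiv ℝ f (t, w)).comp
        ((0 : Hyb n d →L[ℝ] ℝ).prod (ContinuousLinearMap.id ℝ (Hyb n d)))) w :=
    (smooth_diffAt hf (t, w)).hasFDerivAt.comp w h
  rw [h2.fderiv]
  rfl

theorem dpH_slice {f : EH n d → ℝ} (hf : SmoothR f) (i : Fin n) (t : ℝ) (w : Hyb n d) :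
    dpH i (fun w' => f (t, w')) w = pd (bvec n d i) f (t, w) := by
  rw [dpH, slice_fderiv hf]; rfl

theorem dqH_slice {f : EH n d → ℝ} (hf : SmoothR f) (i : Fin n) (t : ℝ) (w : Hyb n d) :
    dqH i (fun w' => f (t, w')) w = pd (avec n d i) f (t, w) := by
  rw [dqH, slice_fderiv hf]; rfl

theorem deriv_slice {f : EH n d → ℝ} (hf : SmoothR f) (t : ℝ) (w : Hyb n d) :
    deriv (fun s => f (s, w)) t = pd (tvec n d) f (t, w) := by
  have h : HasFDerivAt (fun s : ℝ => (s, w))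
      ((ContinuousLinearMap.id ℝ ℝ).prod (0 : ℝ →L[ℝ] Hyb n d)) t :=
    HasFDerivAt.prodMk (hasFDerivAt_id t) (hasFDerivAt_const w t)
  have h2 : HasFDerivAt (fun s => f (s, w))
      ((fderiv ℝ f (t, w)).comp ((ContinuousLinearMap.id ℝ ℝ).prod (0 : ℝ →L[ℝ] Hyb n d))) t :=
    (smooth_diffAt hf (t, w)).hasFDerivAt.comp t h
  rw [← fderiv_apply_one_eq_deriv, h2.fderiv]
  rfl

theorem pbH_slice {f g : EH n d → ℝ} (hf : SmoothR f) (hg : SmoothR g) (t : ℝ) (w : Hyb n d) :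
    pbH (fun w' => f (t, w')) (fun w' => g (t, w')) w = pb2 f g (t, w) := by
  rw [pbH, pb2]
  refine Finset.sum_congr rfl fun i _ => ?_
  rw [dqH_slice hf, dpH_slice hg, dpH_slice hf, dqH_slice hg]

theorem pd_lift (HI : Hyb n d → ℝ) (hHI : ContDiff ℝ (⊤ : ℕ∞) HI) (u y : EH n d) :
    pd u (fun z : EH n d => HI z.2) y = fderiv ℝ HI y.2 u.2 := by
  have h : HasFDerivAt (fun z : EH n d => HI z.2)
      ((fderiv ℝ HI y.2).comp (ContinuousLinearMap.snd ℝ ℝ (Hyb n d))) y :=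
    ((hHI.differentiable (by norm_cast)).differentiableAt.hasFDerivAt
      (x := y.2)).comp y (hasFDerivAt_snd (p := y))
  rw [pd, h.fderiv]
  rfl

end Bridge

/-- Hybrid density evolution without quantum kinetic energy:
if `∂ₜ𝒮 = L_I + {H_I, 𝒮}` and `∂ₜD = {H_I, D}` (with `L_I = Σᵢ pᵢ ∂H_I/∂pᵢ − H_I`),
then `𝒟 := D + Σᵢ ∂_{pᵢ}(pᵢ D) + {D, 𝒮}` satisfies the `x`-parameterized
classical Liouville equation `∂ₜ𝒟 = {H_I, 𝒟}`. -/
theorem hybrid_density_liouville_no_kinetic (n d : ℕ)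
    (HI : Hyb n d → ℝ) (hHI : ContDiff ℝ (⊤ : ℕ∞) HI)
    (𝒮 D : ℝ × Hyb n d → ℝ)
    (h𝒮 : ContDiff ℝ (⊤ : ℕ∞) 𝒮) (hD : ContDiff ℝ (⊤ : ℕ∞) D)
    (h𝒮eq : ∀ (t : ℝ) (w : Hyb n d),
      deriv (fun s => 𝒮 (s, w)) t
        = ((∑ i, w.1.2 i * dpH i HI w) - HI w) + pbH HI (fun w' => 𝒮 (t, w')) w)
    (hDeq : ∀ (t : ℝ) (w : Hyb n d),
      deriv (fun s => D (s, w)) t = pbH HI (fun w' => D (t, w')) w) :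
    ∀ (t : ℝ) (w : Hyb n d),
      deriv (fun s => D (s, w) + ∑ i, dpH i (fun w' => w'.1.2 i * D (s, w')) w
          + pbH (fun w' => D (s, w')) (fun w' => 𝒮 (s, w')) w) t
        = pbH HI
            (fun w' => D (t, w') + ∑ i, dpH i (fun w'' => w''.1.2 i * D (t, w'')) w'
              + pbH (fun w'' => D (t, w'')) (fun w'' => 𝒮 (t, w'')) w') w := by
  intro t w
  -- lift `H_I` to the extended space `ℝ × Hyb n d`
  set HL : EH n d → ℝ := fun z => HI z.2 with hHLdef
  have hHL : SmoothR HL := hHI.comp contDiff_snd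
  have hD' : SmoothR D := hD
  have hS' : SmoothR 𝒮 := h𝒮
  have hpdHL : ∀ (u y : EH n d), pd u HL y = fderiv ℝ HI y.2 u.2 := fun u y =>
    pd_lift HI hHI u y
  have hdq : ∀ (i : Fin n) (y : EH n d), pd (avec n d i) HL y = dqH i HI y.2 := by
    intro i y; rw [hpdHL]; rfl
  have hdp : ∀ (i : Fin n) (y : EH n d), pd (bvec n d i) HL y = dpH i HI y.2 := by
    intro i y; rw [hpdHL]; rfl
  have hPc : ∀ (i : Fin n) (y : EH n d), Pc n d i y = y.2.1.2 i := fun i y => rfl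
  have hpbHL : ∀ (g : EH n d → ℝ), SmoothR g → ∀ (t' : ℝ) (w' : Hyb n d),
      pbH HI (fun w'' => g (t', w'')) w' = pb2 HL g (t', w') := by
    intro g hg t' w'
    rw [pbH, pb2]
    refine Finset.sum_congr rfl fun i _ => ?_
    rw [dqH_slice hg, dpH_slice hg, hdq i (t', w'), hdp i (t', w')]
  -- convert the evolution hypotheses
  have hDt : ∀ y : EH n d, pd (tvec n d) D y = pb2 HL D y := by
    intro y
    have h := hDeq y.1 y.2
    rw [deriv_slice hD' y.1 y.2, hpbHL D hD' y.1 y.2] at h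
    exact h
  have hSt : ∀ y : EH n d, pd (tvec n d) 𝒮 y = Lop HL y + pb2 HL 𝒮 y := by
    intro y
    have h := h𝒮eq y.1 y.2
    rw [deriv_slice hS' y.1 y.2, hpbHL 𝒮 hS' y.1 y.2] at h
    rw [h, Lop]
    have : ∀ i : Fin n, y.2.1.2 i * dpH i HI y.2 = Pc n d i y * pd (bvec n d i) HL y := by
      intro i; rw [hdp i y]; rfl
    rw [Finset.sum_congr rfl fun i _ => this i]
  -- identify the hybrid density with `𝒟 = D + Σᵢ ∂_{pᵢ}(pᵢ D) + {D, 𝒮}`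
  have hsliceAD : ∀ (s : ℝ) (w' : Hyb n d),
      (∑ i, dpH i (fun w'' => w''.1.2 i * D (s, w'')) w') = ADop D (s, w') := by
    intro s w'
    rw [ADop]
    refine Finset.sum_congr rfl fun i _ => ?_
    exact dpH_slice ((smooth_Pc i).mul hD') i s w'
  have hslicePB : ∀ (s : ℝ) (w' : Hyb n d),
      pbH (fun w'' => D (s, w'')) (fun w'' => 𝒮 (s, w'')) w' = pb2 D 𝒮 (s, w') :=
    fun s w' => pbH_slice hD' hS' s w'
  have hDD : SmoothR (fun y : EH n d => D y + ADop D y + pb2 D 𝒮 y) :=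
    (hD'.add hD'.ADop).add (hD'.pb2 hS')
  have hfun : (fun s => D (s, w) + ∑ i, dpH i (fun w' => w'.1.2 i * D (s, w')) w
        + pbH (fun w' => D (s, w')) (fun w' => 𝒮 (s, w')) w)
      = fun s => (fun y : EH n d => D y + ADop D y + pb2 D 𝒮 y) (s, w) := by
    funext s
    rw [hsliceAD s w, hslicePB s w]
  have hfun2 : (fun w' => D (t, w') + ∑ i, dpH i (fun w'' => w''.1.2 i * D (t, w'')) w'
        + pbH (fun w'' => D (t, w'')) (fun w'' => 𝒮 (t, w'')) w')
      = fun w' => (fun y : EH n d => D y + ADop D y + pb2 D 𝒮 y) (t, w') := by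
    funext w'
    rw [hsliceAD t w', hslicePB t w']
  rw [hfun, hfun2, deriv_slice hDD t w, hpbHL _ hDD t w]
  exact key_liouville hHL hD' hS' hDt hSt (t, w)
end HybAux
end
end
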